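/- arXiv:2211.04111 — 3 statements merged into one kernel-verified Lean document; each statement's English description precedes it below -/
import Mathlib

section
/- (Vaserstein) Let R be a commutative ring, δ ∈ SL_n(R), and V ∈ Um_{n,m}(R) with m > n ≥ 2 or m = n ≥ 3. Then there exists σ ∈ SL_m(R) such that δV = Vσ and the block diagonal matrix σ ⊥ δ^{-1} lies in E_{n+m}(R). -/
open Matrix Polynomial

/-- `ElemGroup R k` is the elementary subgroup `E_k(R)`: generated by the elementary
matrices `e_ij(λ) = I + λ E_ij`, `i ≠ j`. -/
def ElemGroup (R : Type*) [CommRing R] (k : ℕ) : Submonoid (Matrix (Fin k) (Fin k) R) :=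
  Submonoid.closure {A | ∃ (i j : Fin k) (c : R), i ≠ j ∧ A = Matrix.transvection i j c}

/-- `matPerp A B` is the block diagonal matrix `A ⊥ B = diag(A, B)`. -/
def matPerp {R : Type*} [Zero R] {a b : ℕ}
    (A : Matrix (Fin a) (Fin a) R) (B : Matrix (Fin b) (Fin b) R) :
    Matrix (Fin (a + b)) (Fin (a + b)) R :=
  Matrix.reindex finSumFinEquiv finSumFinEquiv (Matrix.fromBlocks A 0 0 B)

section Helpers

variable {R : Type*} [CommRing R] {m n k : ℕ}

private lemma reindex_mul' {ι : Type*} [Fintype ι] [DecidableEq ι] (e : ι ≃ Fin k)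
    (A B : Matrix ι ι R) :
    Matrix.reindex e e A * Matrix.reindex e e B = Matrix.reindex e e (A * B) := by
  simp [Matrix.reindex_apply]

private lemma reindex_std' {ι : Type*} [DecidableEq ι] (e : ι ≃ Fin k) (a b : ι) (c : R) :
    Matrix.reindex e e (Matrix.single a b c) = Matrix.single (e a) (e b) c := by
  ext i j
  simp only [Matrix.reindex_apply, Matrix.submatrix_apply, Matrix.single, Matrix.of_apply]
  simp [Equiv.eq_symm_apply]

private lemma reindex_add' {ι : Type*} [DecidableEq ι] (e : ι ≃ Fin k) (A B : Matrix ι ι R) :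
    Matrix.reindex e e (A + B) = Matrix.reindex e e A + Matrix.reindex e e B := by
  simp [Matrix.reindex_apply, Matrix.submatrix_add]

private lemma upper_mem (e : Fin m ⊕ Fin n ≃ Fin k) (X : Matrix (Fin m) (Fin n) R) :
    Matrix.reindex e e (Matrix.fromBlocks 1 X 0 1) ∈ ElemGroup R k := by
  have hsplit : ∀ Y : Matrix (Fin m) (Fin n) R,
      (Matrix.fromBlocks 1 Y 0 1 : Matrix (Fin m ⊕ Fin n) (Fin m ⊕ Fin n) R)
        = 1 + Matrix.fromBlocks 0 Y 0 0 := by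
    intro Y
    rw [← Matrix.fromBlocks_one (l := Fin m) (m := Fin n) (α := R), Matrix.fromBlocks_add]
    simp
  have hmul : ∀ Y Z : Matrix (Fin m) (Fin n) R,
      Matrix.reindex e e (Matrix.fromBlocks 1 (Y + Z) 0 1)
        = Matrix.reindex e e (Matrix.fromBlocks 1 Y 0 1) *
          Matrix.reindex e e (Matrix.fromBlocks 1 Z 0 1) := by
    intro Y Z
    rw [reindex_mul']
    congr 1
    simp [Matrix.fromBlocks_multiply, add_comm]
  have hzero : Matrix.reindex e e (Matrix.fromBlocks (1 : Matrix (Fin m) (Fin m) R) 0 0 1)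
      = 1 := by
    rw [Matrix.fromBlocks_one]
    simp [Matrix.reindex_apply]
  rw [matrix_eq_sum_single X]
  refine Finset.sum_induction _ (fun Z => Matrix.reindex e e (Matrix.fromBlocks 1 Z 0 1) ∈
      ElemGroup R k) (fun a b ha hb => ?_) ?_ (fun i _ => ?_)
  · show Matrix.reindex e e (Matrix.fromBlocks 1 (a + b) 0 1) ∈ ElemGroup R k
    rw [hmul]; exact mul_mem ha hb
  · show Matrix.reindex e e (Matrix.fromBlocks 1 0 0 1) ∈ ElemGroup R k
    rw [hzero]; exact one_mem _
  · refine Finset.sum_induction _ (fun Z => Matrix.reindex e e (Matrix.fromBlocks 1 Z 0 1) ∈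
        ElemGroup R k) (fun a b ha hb => ?_) ?_ (fun j _ => ?_)
    · show Matrix.reindex e e (Matrix.fromBlocks 1 (a + b) 0 1) ∈ ElemGroup R k
      rw [hmul]; exact mul_mem ha hb
    · show Matrix.reindex e e (Matrix.fromBlocks 1 0 0 1) ∈ ElemGroup R k
      rw [hzero]; exact one_mem _
    · apply Submonoid.subset_closure
      refine ⟨e (Sum.inl i), e (Sum.inr j), X i j, e.injective.ne (by simp), ?_⟩
      have hblk : (Matrix.fromBlocks 0 (Matrix.single i j (X i j)) 0 0 :
          Matrix (Fin m ⊕ Fin n) (Fin m ⊕ Fin n) R)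
          = Matrix.single (Sum.inl i) (Sum.inr j) (X i j) := by
        ext a b
        cases a <;> cases b <;>
          simp [Matrix.single, Matrix.fromBlocks]
      rw [hsplit, reindex_add', hblk, reindex_std', Matrix.transvection]
      congr 1
      simp [Matrix.reindex_apply]

private lemma lower_mem (e : Fin m ⊕ Fin n ≃ Fin k) (X : Matrix (Fin n) (Fin m) R) :
    Matrix.reindex e e (Matrix.fromBlocks 1 0 X 1) ∈ ElemGroup R k := by
  have hsplit : ∀ Y : Matrix (Fin n) (Fin m) R,
      (Matrix.fromBlocks 1 0 Y 1 : Matrix (Fin m ⊕ Fin n) (Fin m ⊕ Fin n) R)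
        = 1 + Matrix.fromBlocks 0 0 Y 0 := by
    intro Y
    rw [← Matrix.fromBlocks_one (l := Fin m) (m := Fin n) (α := R), Matrix.fromBlocks_add]
    simp
  have hmul : ∀ Y Z : Matrix (Fin n) (Fin m) R,
      Matrix.reindex e e (Matrix.fromBlocks 1 0 (Y + Z) 1)
        = Matrix.reindex e e (Matrix.fromBlocks 1 0 Y 1) *
          Matrix.reindex e e (Matrix.fromBlocks 1 0 Z 1) := by
    intro Y Z
    rw [reindex_mul']
    congr 1
    simp [Matrix.fromBlocks_multiply, add_comm]
  have hzero : Matrix.reindex e e (Matrix.fromBlocks (1 : Matrix (Fin m) (Fin m) R) 0 0 1)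
      = 1 := by
    rw [Matrix.fromBlocks_one]
    simp [Matrix.reindex_apply]
  rw [matrix_eq_sum_single X]
  refine Finset.sum_induction _ (fun Z => Matrix.reindex e e (Matrix.fromBlocks 1 0 Z 1) ∈
      ElemGroup R k) (fun a b ha hb => ?_) ?_ (fun i _ => ?_)
  · show Matrix.reindex e e (Matrix.fromBlocks 1 0 (a + b) 1) ∈ ElemGroup R k
    rw [hmul]; exact mul_mem ha hb
  · show Matrix.reindex e e (Matrix.fromBlocks 1 0 0 1) ∈ ElemGroup R k
    rw [hzero]; exact one_mem _
  · refine Finset.sum_induction _ (fun Z => Matrix.reindex e e (Matrix.fromBlocks 1 0 Z 1) ∈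
        ElemGroup R k) (fun a b ha hb => ?_) ?_ (fun j _ => ?_)
    · show Matrix.reindex e e (Matrix.fromBlocks 1 0 (a + b) 1) ∈ ElemGroup R k
      rw [hmul]; exact mul_mem ha hb
    · show Matrix.reindex e e (Matrix.fromBlocks 1 0 0 1) ∈ ElemGroup R k
      rw [hzero]; exact one_mem _
    · apply Submonoid.subset_closure
      refine ⟨e (Sum.inr i), e (Sum.inl j), X i j, e.injective.ne (by simp), ?_⟩
      have hblk : (Matrix.fromBlocks 0 0 (Matrix.single i j (X i j)) 0 :
          Matrix (Fin m ⊕ Fin n) (Fin m ⊕ Fin n) R)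
          = Matrix.single (Sum.inr i) (Sum.inl j) (X i j) := by
        ext a b
        cases a <;> cases b <;>
          simp [Matrix.single, Matrix.fromBlocks]
      rw [hsplit, reindex_add', hblk, reindex_std', Matrix.transvection]
      congr 1
      simp [Matrix.reindex_apply]

end Helpers

/-- Vaserstein. -/
theorem stmt4 {R : Type*} [CommRing R] [Nontrivial R] {n m : ℕ}
    (hdim : (m > n ∧ 2 ≤ n) ∨ (m = n ∧ 3 ≤ n))
    (δ : Matrix (Fin n) (Fin n) R) (hδ : δ.det = 1)
    (V : Matrix (Fin n) (Fin m) R) (hV : ∃ B : Matrix (Fin m) (Fin n) R, V * B = 1) :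
    ∃ σ : Matrix (Fin m) (Fin m) R, σ.det = 1 ∧ δ * V = V * σ ∧
      Matrix.reindex (finCongr (by omega : m + n = n + m)) (finCongr (by omega : m + n = n + m))
        (matPerp σ δ⁻¹) ∈ ElemGroup R (n + m) := by
  obtain ⟨B, hB⟩ := hV
  have hu : IsUnit δ.det := by rw [hδ]; exact isUnit_one
  have h1 : δ * δ⁻¹ = 1 := Matrix.mul_nonsing_inv δ hu
  have h2 : δ⁻¹ * δ = 1 := Matrix.nonsing_inv_mul δ hu
  set Y : Matrix (Fin n) (Fin m) R := (δ - 1) * V with hY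
  have hYB : Y * B = δ - 1 := by rw [hY, Matrix.mul_assoc, hB, Matrix.mul_one]
  have h3 : (δ - 1) * δ⁻¹ = 1 - δ⁻¹ := by rw [Matrix.sub_mul, h1, Matrix.one_mul]
  refine ⟨1 + B * Y, ?_, ?_, ?_⟩
  · rw [Matrix.det_one_add_mul_comm]
    have : (1 : Matrix (Fin n) (Fin n) R) + Y * B = δ := by rw [hYB]; abel
    rw [this, hδ]
  · rw [Matrix.mul_add, Matrix.mul_one, ← Matrix.mul_assoc, hB, Matrix.one_mul, hY,
      Matrix.sub_mul, Matrix.one_mul]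
    abel
  · -- the block factorization
    have step1 : (Matrix.fromBlocks 1 B 0 1 * Matrix.fromBlocks 1 0 Y 1 :
        Matrix (Fin m ⊕ Fin n) (Fin m ⊕ Fin n) R) = Matrix.fromBlocks (1 + B * Y) B Y 1 := by
      simp [Matrix.fromBlocks_multiply]
    have g1 : (1 + B * Y) * (-(B * δ⁻¹)) + B = 0 := by
      have hx : B * Y * (B * δ⁻¹) = B - B * δ⁻¹ := by
        rw [Matrix.mul_assoc B Y, ← Matrix.mul_assoc Y B, hYB, h3, Matrix.mul_sub,
          Matrix.mul_one]
      rw [Matrix.add_mul, Matrix.one_mul, Matrix.mul_neg, hx]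
      abel
    have g2 : Y * (-(B * δ⁻¹)) + 1 = δ⁻¹ := by
      have hx : Y * (B * δ⁻¹) = 1 - δ⁻¹ := by
        rw [← Matrix.mul_assoc Y B, hYB, h3]
      rw [Matrix.mul_neg, hx]
      abel
    have g3 : Y + δ⁻¹ * (-(δ * Y)) = 0 := by
      rw [Matrix.mul_neg, ← Matrix.mul_assoc, h2, Matrix.one_mul]
      abel
    have step2 : (Matrix.fromBlocks (1 + B * Y) B Y 1 *
        Matrix.fromBlocks 1 (-(B * δ⁻¹)) 0 1 : Matrix (Fin m ⊕ Fin n) (Fin m ⊕ Fin n) R)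
        = Matrix.fromBlocks (1 + B * Y) 0 Y δ⁻¹ := by
      rw [Matrix.fromBlocks_multiply]
      rw [Matrix.fromBlocks_inj]
      refine ⟨by simp, by simpa using g1, by simp, by simpa using g2⟩
    have step3 : (Matrix.fromBlocks (1 + B * Y) 0 Y δ⁻¹ *
        Matrix.fromBlocks 1 0 (-(δ * Y)) 1 : Matrix (Fin m ⊕ Fin n) (Fin m ⊕ Fin n) R)
        = Matrix.fromBlocks (1 + B * Y) 0 0 δ⁻¹ := by
      rw [Matrix.fromBlocks_multiply]
      rw [Matrix.fromBlocks_inj]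
      refine ⟨by simp, by simp, by simpa using g3, by simp⟩
    have fact : (Matrix.fromBlocks (1 + B * Y) 0 0 δ⁻¹ :
        Matrix (Fin m ⊕ Fin n) (Fin m ⊕ Fin n) R)
        = Matrix.fromBlocks 1 B 0 1 * Matrix.fromBlocks 1 0 Y 1 *
          Matrix.fromBlocks 1 (-(B * δ⁻¹)) 0 1 * Matrix.fromBlocks 1 0 (-(δ * Y)) 1 := by
      rw [step1, step2, step3]
    set e : Fin m ⊕ Fin n ≃ Fin (n + m) :=
      finSumFinEquiv.trans (finCongr (by omega)) with he
    have hre : Matrix.reindex (finCongr (by omega : m + n = n + m))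
        (finCongr (by omega : m + n = n + m)) (matPerp (1 + B * Y) δ⁻¹)
        = Matrix.reindex e e (Matrix.fromBlocks (1 + B * Y) 0 0 δ⁻¹) := by
      simp [matPerp, Matrix.reindex_apply, Matrix.submatrix_submatrix, he]
    rw [hre, fact, ← reindex_mul', ← reindex_mul', ← reindex_mul']
    exact mul_mem (mul_mem (mul_mem (upper_mem e B) (lower_mem e Y))
      (upper_mem e (-(B * δ⁻¹)))) (lower_mem e (-(δ * Y)))
end

section
/- (Roitman) Let R be a commutative ring, (x_0,…,x_n) ∈ Um_{n+1}(R) with n ≥ 2, let 0 ≤ k ≤ n-1 and y_i ∈ R for k ≤ i ≤ n. Let I be the ideal of R generated by the 2×2 minors of the 2×(n-k+1) matrix with rows (x_k,…,x_n) and (y_k,…,y_n). If Rx_0 + ⋯ + Rx_{k-1} + I = R, then (x_0,…,x_{k-1},x_k,…,x_n) is elementarily equivalent to (x_0,…,x_{k-1},y_k,…,y_n). -/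
open Matrix Polynomial

section Aux

variable {R : Type*} [CommRing R] {m : ℕ}

private lemma vmv_mul (a b c d : Fin m → R) :
    vecMulVec a b * vecMulVec c d = (b ⬝ᵥ c) • vecMulVec a d := by
  ext i j
  simp only [Matrix.mul_apply, vecMulVec_apply, Matrix.smul_apply, smul_eq_mul,
    dotProduct, Finset.sum_mul]
  exact Finset.sum_congr rfl fun l _ => by ring

private lemma vmv_add_right (a b c : Fin m → R) :
    vecMulVec a (b + c) = vecMulVec a b + vecMulVec a c := by
  ext i j; simp [vecMulVec_apply, mul_add]

private lemma vmv_add_left (a b c : Fin m → R) :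
    vecMulVec (a + b) c = vecMulVec a c + vecMulVec b c := by
  ext i j; simp [vecMulVec_apply, add_mul]

private lemma vmv_zero_right (a : Fin m → R) : vecMulVec a (0 : Fin m → R) = 0 := by
  ext i j; simp [vecMulVec_apply]

private lemma vmv_zero_left (a : Fin m → R) : vecMulVec (0 : Fin m → R) a = 0 := by
  ext i j; simp [vecMulVec_apply]

private lemma dotP_sum {ι : Type*} (S : Finset ι) (w : ι → Fin m → R) (v : Fin m → R) :
    (∑ l ∈ S, w l) ⬝ᵥ v = ∑ l ∈ S, w l ⬝ᵥ v := by
  simp only [dotProduct, Finset.sum_apply, Finset.sum_mul]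
  exact Finset.sum_comm

private lemma dotP_sum' {ι : Type*} (S : Finset ι) (v : Fin m → R) (w : ι → Fin m → R) :
    v ⬝ᵥ (∑ l ∈ S, w l) = ∑ l ∈ S, v ⬝ᵥ w l := by
  simp only [dotProduct, Finset.sum_apply, Finset.mul_sum]
  exact Finset.sum_comm

private lemma transvection_eq (a r : Fin m) (c : R) :
    Matrix.transvection a r c = 1 + vecMulVec (Pi.single a c) (Pi.single r 1) := by
  unfold Matrix.transvection
  congr 1
  ext i' j'
  simp only [Matrix.single, Matrix.of_apply, vecMulVec_apply, Pi.single_apply]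
  rcases eq_or_ne a i' with rfl | h1
  · rcases eq_or_ne r j' with rfl | h2
    · simp
    · simp [h2, Ne.symm h2]
  · simp [h1, Ne.symm h1]

private lemma transvection_eq' (r a : Fin m) (c : R) :
    Matrix.transvection r a c = 1 + vecMulVec (Pi.single r 1) (Pi.single a c) := by
  unfold Matrix.transvection
  congr 1
  ext i' j'
  simp only [Matrix.single, Matrix.of_apply, vecMulVec_apply, Pi.single_apply]
  rcases eq_or_ne r i' with rfl | h1
  · rcases eq_or_ne a j' with rfl | h2
    · simp
    · simp [h2, Ne.symm h2]
  · simp [h1, Ne.symm h1]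

/-- column case: `1 + p ⊗ e_r ∈ E` when `p r = 0`. -/
private lemma mem_col (p : Fin m → R) (r : Fin m) (hp : p r = 0) :
    (1 + vecMulVec p (Pi.single r 1)) ∈ ElemGroup R m := by
  have key : ∀ S : Finset (Fin m), r ∉ S →
      (1 + vecMulVec (fun l => if l ∈ S then p l else 0) (Pi.single r 1)) ∈ ElemGroup R m := by
    intro S
    induction S using Finset.induction_on with
    | empty =>
      intro _
      have : (fun l : Fin m => if l ∈ (∅ : Finset (Fin m)) then p l else 0)
          = (0 : Fin m → R) := by funext l; simp
      rw [this, vmv_zero_left, add_zero]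
      exact (ElemGroup R m).one_mem
    | @insert a S haS ih =>
      intro hr
      have har : a ≠ r := by
        intro h; exact hr (by simp [h])
      have hrS : r ∉ S := fun h => hr (Finset.mem_insert_of_mem h)
      have hsplit : (fun l => if l ∈ insert a S then p l else 0)
          = Pi.single a (p a) + (fun l => if l ∈ S then p l else 0) := by
        funext l
        by_cases hl : l = a
        · subst hl
          simp [Pi.single_apply, haS]
        · simp [Pi.single_apply, hl, Finset.mem_insert]
      have hz : vecMulVec (Pi.single a (p a)) (Pi.single r 1) *
          vecMulVec (fun l => if l ∈ S then p l else 0) (Pi.single r 1) = 0 := by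
        rw [vmv_mul]
        have : (Pi.single r 1 : Fin m → R) ⬝ᵥ (fun l => if l ∈ S then p l else 0) = 0 := by
          rw [single_dotProduct]
          simp [hrS]
        rw [this, zero_smul]
      have heq : (1 + vecMulVec (fun l => if l ∈ insert a S then p l else 0) (Pi.single r 1))
          = Matrix.transvection a r (p a) *
            (1 + vecMulVec (fun l => if l ∈ S then p l else 0) (Pi.single r 1)) := by
        rw [transvection_eq, hsplit, vmv_add_left]
        have expand : ∀ A B : Matrix (Fin m) (Fin m) R,
            (1 + A) * (1 + B) = 1 + (A + B) + A * B := by intro A B; noncomm_ring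
        rw [expand, hz, add_zero]
      rw [heq]
      exact mul_mem (Submonoid.subset_closure ⟨a, r, p a, har, rfl⟩) (ih hrS)
  have := key (Finset.univ.erase r) (Finset.notMem_erase r _)
  have hfun : (fun l => if l ∈ Finset.univ.erase r then p l else 0) = p := by
    funext l
    by_cases hl : l = r
    · subst hl; simp [hp]
    · simp [Finset.mem_erase, hl]
  rwa [hfun] at this

/-- row case: `1 + e_r ⊗ q ∈ E` when `q r = 0`. -/
private lemma mem_row (q : Fin m → R) (r : Fin m) (hq : q r = 0) :
    (1 + vecMulVec (Pi.single r 1) q) ∈ ElemGroup R m := by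
  have key : ∀ S : Finset (Fin m), r ∉ S →
      (1 + vecMulVec (Pi.single r 1) (fun l => if l ∈ S then q l else 0)) ∈ ElemGroup R m := by
    intro S
    induction S using Finset.induction_on with
    | empty =>
      intro _
      have : (fun l : Fin m => if l ∈ (∅ : Finset (Fin m)) then q l else 0)
          = (0 : Fin m → R) := by funext l; simp
      rw [this, vmv_zero_right, add_zero]
      exact (ElemGroup R m).one_mem
    | @insert a S haS ih =>
      intro hr
      have har : r ≠ a := by
        intro h; exact hr (by simp [← h])
      have hrS : r ∉ S := fun h => hr (Finset.mem_insert_of_mem h)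
      have hsplit : (fun l => if l ∈ insert a S then q l else 0)
          = Pi.single a (q a) + (fun l => if l ∈ S then q l else 0) := by
        funext l
        by_cases hl : l = a
        · subst hl
          simp [Pi.single_apply, haS]
        · simp [Pi.single_apply, hl, Finset.mem_insert]
      have hz : vecMulVec (Pi.single r 1) (Pi.single a (q a)) *
          vecMulVec (Pi.single r 1) (fun l => if l ∈ S then q l else 0) = 0 := by
        rw [vmv_mul]
        have : (Pi.single a (q a) : Fin m → R) ⬝ᵥ (Pi.single r 1 : Fin m → R) = 0 := by
          rw [single_dotProduct]
          simp [Pi.single_apply, har.symm]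
        rw [this, zero_smul]
      have heq : (1 + vecMulVec (Pi.single r 1) (fun l => if l ∈ insert a S then q l else 0))
          = Matrix.transvection r a (q a) *
            (1 + vecMulVec (Pi.single r 1) (fun l => if l ∈ S then q l else 0)) := by
        rw [transvection_eq', hsplit, vmv_add_right]
        have expand : ∀ A B : Matrix (Fin m) (Fin m) R,
            (1 + A) * (1 + B) = 1 + (A + B) + A * B := by intro A B; noncomm_ring
        rw [expand, hz, add_zero]
      rw [heq]
      exact mul_mem (Submonoid.subset_closure ⟨r, a, q a, har, rfl⟩) (ih hrS)
  have := key (Finset.univ.erase r) (Finset.notMem_erase r _)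
  have hfun : (fun l => if l ∈ Finset.univ.erase r then q l else 0) = q := by
    funext l
    by_cases hl : l = r
    · subst hl; simp [hq]
    · simp [Finset.mem_erase, hl]
  rwa [hfun] at this

private lemma comm_trick {A : Type*} [Ring A] {P Q : A}
    (hP : P * P = 0) (hQ : Q * Q = 0) (hQP : Q * P = 0) :
    (1 + P) * ((1 + Q) * ((1 - P) * (1 - Q))) = 1 + P * Q := by
  have step1 : (1 - P) * (1 - Q) = 1 - P - Q + P * Q := by noncomm_ring
  have step2 : (1 + Q) * (1 - P - Q + P * Q)
      = 1 - P + P * Q - Q * P - Q * Q + (Q * P) * Q := by noncomm_ring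
  have step3 : (1 + P) * (1 - P + P * Q) = 1 + P * Q - P * P + (P * P) * Q := by noncomm_ring
  rw [step1, step2, hQP, hQ]
  have : (1 : A) - P + P * Q - 0 - 0 + (0 : A) * Q = 1 - P + P * Q := by noncomm_ring
  rw [this, step3, hP]
  noncomm_ring

/-- If `p` and `q` are orthogonal and both vanish at some index `r`, then `1 + p ⊗ q ∈ E`. -/
private lemma mem_commonZero (p q : Fin m → R) (r : Fin m)
    (hp : p r = 0) (hq : q r = 0) (hqp : q ⬝ᵥ p = 0) :
    (1 + vecMulVec p q) ∈ ElemGroup R m := by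
  set P := vecMulVec p (Pi.single r 1) with hPdef
  set Q := vecMulVec (Pi.single r 1) q with hQdef
  have hPP : P * P = 0 := by
    rw [hPdef, vmv_mul, single_dotProduct, hp, mul_zero, zero_smul]
  have hQQ : Q * Q = 0 := by
    rw [hQdef, vmv_mul, dotProduct_single, hq, zero_mul, zero_smul]
  have hQP : Q * P = 0 := by
    rw [hQdef, hPdef, vmv_mul, hqp, zero_smul]
  have hPQ : P * Q = vecMulVec p q := by
    rw [hPdef, hQdef, vmv_mul, dotProduct_single]
    simp
  have key := comm_trick hPP hQQ hQP
  rw [hPQ] at key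
  rw [← key]
  have h1m : (1 : Matrix (Fin m) (Fin m) R) - P = 1 + vecMulVec (-p) (Pi.single r 1) := by
    rw [hPdef]; ext i j; simp [vecMulVec_apply]; ring
  have h1q : (1 : Matrix (Fin m) (Fin m) R) - Q = 1 + vecMulVec (Pi.single r 1) (-q) := by
    rw [hQdef]; ext i j; simp [vecMulVec_apply]; ring
  refine mul_mem (mem_col p r hp) (mul_mem (mem_row q r hq) (mul_mem ?_ ?_))
  · rw [h1m]; exact mem_col (-p) r (by simp [hp])
  · rw [h1q]; exact mem_row (-q) r (by simp [hq])

/-- Suslin's core lemma: `1 + c ⊗ (ν (cᵢ e_j − c_j e_i)) ∈ E` for `m ≥ 3`. -/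
private lemma mem_core (hm : 3 ≤ m) (c : Fin m → R) (i j : Fin m) (ν : R) :
    (1 + vecMulVec c (ν • (c i • (Pi.single j 1 : Fin m → R) - c j • (Pi.single i 1 : Fin m → R)))) ∈ ElemGroup R m := by
  rcases eq_or_ne i j with rfl | hij
  · rw [sub_self, smul_zero, vmv_zero_right, add_zero]
    exact (ElemGroup R m).one_mem
  -- find a third index r
  have hex : ∃ r : Fin m, r ∉ ({i, j} : Finset (Fin m)) := by
    by_contra hcon
    push_neg at hcon
    have hsub : (Finset.univ : Finset (Fin m)) ⊆ {i, j} := fun r _ => hcon r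
    have hcard := Finset.card_le_card hsub
    have h2 : ({i, j} : Finset (Fin m)).card ≤ 2 := by
      refine le_trans (Finset.card_insert_le _ _) ?_
      simp
    simp only [Finset.card_univ, Fintype.card_fin] at hcard
    omega
  obtain ⟨r, hr⟩ := hex
  simp only [Finset.mem_insert, Finset.mem_singleton, not_or] at hr
  obtain ⟨hri, hrj⟩ := hr
  set w : Fin m → R := ν • (c i • (Pi.single j 1 : Fin m → R) - c j • (Pi.single i 1 : Fin m → R)) with hw
  have wval : ∀ l, w l = ν * (c i * (if l = j then 1 else 0) - c j * (if l = i then 1 else 0)) := by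
    intro l
    simp [hw, Pi.single_apply]
  have wdot : ∀ v : Fin m → R, w ⬝ᵥ v = ν * (c i * v j - c j * v i) := by
    intro v
    rw [hw]
    simp only [smul_dotProduct, sub_dotProduct, single_dotProduct, smul_eq_mul]
    ring
  set c' : Fin m → R := Pi.single i (c i) + Pi.single j (c j) with hc'
  set c'' : Fin m → R := c - c' with hc''
  have hc'i : c' i = c i := by simp [hc', Pi.single_apply, hij, Ne.symm hij]
  have hc'j : c' j = c j := by simp [hc', Pi.single_apply, hij, Ne.symm hij]
  have hc'r : c' r = 0 := by simp [hc', Pi.single_apply, hri, hrj]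
  have hc''i : c'' i = 0 := by simp [hc'', hc'i]
  have hc''j : c'' j = 0 := by simp [hc'', hc'j]
  have hwr : w r = 0 := by rw [wval]; simp [hri, hrj]
  have hwc' : w ⬝ᵥ c' = 0 := by rw [wdot, hc'i, hc'j]; ring
  have hwc'' : w ⬝ᵥ c'' = 0 := by rw [wdot, hc''i, hc''j]; ring
  -- the three factors
  set q2 : Fin m → R := (ν * c i) • (Pi.single j 1 : Fin m → R) with hq2
  set q3 : Fin m → R := (-(ν * c j)) • (Pi.single i 1 : Fin m → R) with hq3
  have hq2i : q2 i = 0 := by simp [hq2, Pi.single_apply, hij, Ne.symm hij]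
  have hq3j : q3 j = 0 := by simp [hq3, Pi.single_apply, hij, Ne.symm hij]
  have hq2c'' : q2 ⬝ᵥ c'' = 0 := by
    rw [hq2, smul_dotProduct, single_dotProduct, hc''j]; simp
  have hq3c'' : q3 ⬝ᵥ c'' = 0 := by
    rw [hq3, smul_dotProduct, single_dotProduct, hc''i]; simp
  have hF1 : (1 + vecMulVec c' w) ∈ ElemGroup R m :=
    mem_commonZero c' w r hc'r hwr hwc'
  have hF2 : (1 + vecMulVec c'' q2) ∈ ElemGroup R m :=
    mem_commonZero c'' q2 i hc''i (by simp [hq2, Pi.single_apply, Ne.symm hij]) hq2c''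
  have hF3 : (1 + vecMulVec c'' q3) ∈ ElemGroup R m :=
    mem_commonZero c'' q3 j hc''j (by simp [hq3, Pi.single_apply, hij]) hq3c''
  have hq23 : q2 + q3 = w := by
    funext l
    rw [wval]
    simp only [hq2, hq3, Pi.add_apply, Pi.smul_apply, Pi.single_apply, smul_eq_mul]
    ring
  have expand : ∀ A B : Matrix (Fin m) (Fin m) R,
      (1 + A) * (1 + B) = 1 + (A + B) + A * B := by intro A B; noncomm_ring
  have e23 : (1 + vecMulVec c'' q2) * (1 + vecMulVec c'' q3) = 1 + vecMulVec c'' w := by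
    rw [expand]
    have hz : vecMulVec c'' q2 * vecMulVec c'' q3 = 0 := by
      rw [vmv_mul, hq2c'', zero_smul]
    rw [hz, add_zero, ← vmv_add_right, hq23]
  have e123 : (1 + vecMulVec c' w) * (1 + vecMulVec c'' w) = 1 + vecMulVec c w := by
    rw [expand]
    have hz : vecMulVec c' w * vecMulVec c'' w = 0 := by
      rw [vmv_mul, hwc'', zero_smul]
    rw [hz, add_zero, ← vmv_add_left]
    have : c' + c'' = c := by rw [hc'']; abel
    rw [this]
  have : (1 : Matrix (Fin m) (Fin m) R) + vecMulVec c w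
      = (1 + vecMulVec c' w) * ((1 + vecMulVec c'' q2) * (1 + vecMulVec c'' q3)) := by
    rw [e23, e123]
  rw [this]
  exact mul_mem hF1 (mul_mem hF2 hF3)

/-- Suslin's lemma: if `c` is unimodular and `c ⬝ d = 0`, `m ≥ 3`, then `1 + c ⊗ d ∈ E`. -/
private lemma mem_suslin (hm : 3 ≤ m) (c h d : Fin m → R)
    (hch : c ⬝ᵥ h = 1) (hcd : c ⬝ᵥ d = 0) :
    (1 + vecMulVec c d) ∈ ElemGroup R m := by
  classical
  set w : Fin m × Fin m → Fin m → R :=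
    fun p => (h p.1 * d p.2) • (c p.1 • (Pi.single p.2 1 : Fin m → R) - c p.2 • (Pi.single p.1 1 : Fin m → R)) with hwdef
  have hwc : ∀ p, w p ⬝ᵥ c = 0 := by
    intro p
    show ((h p.1 * d p.2) • (c p.1 • (Pi.single p.2 1 : Fin m → R) - c p.2 • (Pi.single p.1 1 : Fin m → R))) ⬝ᵥ c = 0
    simp only [smul_dotProduct, sub_dotProduct, single_dotProduct, smul_eq_mul]
    ring
  have hprod : ∀ L : List (Fin m × Fin m),
      (L.map (fun p => 1 + vecMulVec c (w p))).prod = 1 + vecMulVec c ((L.map w).sum) := by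
    intro L
    induction L with
    | nil => simp [vmv_zero_right]
    | cons a L ih =>
      rw [List.map_cons, List.prod_cons, ih, List.map_cons, List.sum_cons]
      have expand : ∀ A B : Matrix (Fin m) (Fin m) R,
          (1 + A) * (1 + B) = 1 + (A + B) + A * B := by intro A B; noncomm_ring
      rw [expand]
      have hz : vecMulVec c (w a) * vecMulVec c ((L.map w).sum) = 0 := by
        rw [vmv_mul, hwc, zero_smul]
      rw [hz, add_zero, ← vmv_add_right]
  have hsum : (∑ p : Fin m × Fin m, w p) = d := by
    have hterm : ∀ p : Fin m × Fin m,
        w p = (h p.1 * c p.1) • (Pi.single p.2 (d p.2) : Fin m → R)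
          - (d p.2 * c p.2) • (Pi.single p.1 (h p.1) : Fin m → R) := by
      intro p
      funext l
      simp only [hwdef, Pi.smul_apply, Pi.sub_apply, Pi.single_apply, smul_eq_mul,
        mul_ite, mul_one, mul_zero]
      split_ifs <;> ring
    calc (∑ p : Fin m × Fin m, w p)
        = ∑ i : Fin m, ∑ j : Fin m,
            ((h i * c i) • (Pi.single j (d j) : Fin m → R) - (d j * c j) • (Pi.single i (h i) : Fin m → R)) := by
          rw [Fintype.sum_prod_type]
          exact Finset.sum_congr rfl fun i _ => Finset.sum_congr rfl fun j _ => hterm (i, j)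
      _ = (∑ i : Fin m, (h i * c i) • (∑ j : Fin m, (Pi.single j (d j) : Fin m → R)))
            - ∑ i : Fin m, (∑ j : Fin m, d j * c j) • (Pi.single i (h i) : Fin m → R) := by
          rw [← Finset.sum_sub_distrib]
          refine Finset.sum_congr rfl fun i _ => ?_
          rw [Finset.sum_sub_distrib]
          congr 1
          · rw [Finset.smul_sum]
          · rw [Finset.sum_smul]
      _ = d := by
          have h1 : (∑ j : Fin m, (Pi.single j (d j) : Fin m → R)) = d := Finset.univ_sum_single d
          have h2 : (∑ j : Fin m, d j * c j) = 0 := by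
            rw [← hcd]; simp [dotProduct, mul_comm]
          rw [h1, h2]
          simp only [zero_smul, Finset.sum_const_zero, sub_zero, ← Finset.sum_smul]
          have h3 : (∑ i : Fin m, h i * c i) = 1 := by
            rw [← hch]; simp [dotProduct, mul_comm]
          rw [h3, one_smul]
  have heq : (1 : Matrix (Fin m) (Fin m) R) + vecMulVec c d
      = ((Finset.univ.toList).map (fun p : Fin m × Fin m => 1 + vecMulVec c (w p))).prod := by
    rw [hprod, Finset.sum_map_toList, hsum]
  rw [heq]
  refine Submonoid.list_prod_mem _ ?_
  intro A hA
  simp only [List.mem_map] at hA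
  obtain ⟨p, -, rfl⟩ := hA
  exact mem_core hm c p.1 p.2 (h p.1 * d p.2)

end Aux

/-- Roitman: let `(x_0, …, x_n)` be a unimodular row, `0 ≤ k ≤ n - 1`,
`y_i ∈ R` for `k ≤ i ≤ n`, and let `I` be the ideal generated by the `2×2` minors of the
matrix with rows `(x_k, …, x_n)` and `(y_k, …, y_n)`.  If `Rx_0 + ⋯ + Rx_{k-1} + I = R`
then `(x_0, …, x_n) ~_E (x_0, …, x_{k-1}, y_k, …, y_n)`. -/
theorem stmt6 {R : Type*} [CommRing R] [Nontrivial R] {n : ℕ} (hn : 2 ≤ n)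
    (x y : Fin (n + 1) → R)
    (hx : ∃ b : Fin (n + 1) → R, ∑ i, x i * b i = 1)
    (k : ℕ) (hk : k ≤ n - 1)
    (hI : Ideal.span ((x '' {i : Fin (n + 1) | i.val < k}) ∪
            {r : R | ∃ i j : Fin (n + 1), k ≤ i.val ∧ k ≤ j.val ∧
              r = x i * y j - x j * y i}) = ⊤) :
    ∃ ε ∈ ElemGroup R (n + 1),
      Matrix.vecMul x ε = fun i : Fin (n + 1) => if i.val < k then x i else y i := by
  classical
  have h1 : (1 : R) ∈ Ideal.span ((x '' {i : Fin (n + 1) | i.val < k}) ∪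
      {r : R | ∃ i j : Fin (n + 1), k ≤ i.val ∧ k ≤ j.val ∧
        r = x i * y j - x j * y i}) := by
    rw [hI]; trivial
  rw [Ideal.span_union] at h1
  obtain ⟨u, hu, v, hv, huv⟩ := Submodule.mem_sup.mp h1
  obtain ⟨N₁, f₁, g₁, hg₁⟩ := Submodule.mem_span_set'.mp hu
  obtain ⟨N₂, f₂, g₂, hg₂⟩ := Submodule.mem_span_set'.mp hv
  -- extract index data
  have hg₁' : ∀ l, ∃ i : Fin (n + 1), i.val < k ∧ x i = (g₁ l : R) := by
    intro l
    obtain ⟨i, hi, hxi⟩ := (g₁ l).2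
    exact ⟨i, hi, hxi⟩
  choose ι hι hxι using hg₁'
  have hg₂' : ∀ l, ∃ i j : Fin (n + 1), k ≤ i.val ∧ k ≤ j.val ∧
      (g₂ l : R) = x i * y j - x j * y i := fun l => (g₂ l).2
  choose If Jf hIk hJk hgv using hg₂'
  -- the target and difference vector
  set z : Fin (n + 1) → R := fun i => if i.val < k then x i else y i with hz
  set d : Fin (n + 1) → R := fun i => z i - x i with hd
  -- head part of the dual vector
  set a : Fin (n + 1) → R := ∑ l, Pi.single (ι l) (f₁ l) with ha
  -- tail part of the dual vector
  set T : Fin (n + 1) → R := ∑ l,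
      ((f₂ l * (y (Jf l) - x (Jf l))) • (Pi.single (If l) 1 : Fin (n + 1) → R)
        - (f₂ l * (y (If l) - x (If l))) • (Pi.single (Jf l) 1 : Fin (n + 1) → R)) with hT
  -- x ⬝ a = u
  have hax : x ⬝ᵥ a = u := by
    rw [ha, dotP_sum']
    calc (∑ l, x ⬝ᵥ Pi.single (ι l) (f₁ l))
        = ∑ l, f₁ l • (g₁ l : R) := by
          refine Finset.sum_congr rfl fun l _ => ?_
          rw [dotProduct_single, ← hxι l, smul_eq_mul]
          ring
      _ = u := hg₁
  -- x ⬝ T = v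
  have hxT : x ⬝ᵥ T = v := by
    rw [hT, dotP_sum']
    calc (∑ l, x ⬝ᵥ ((f₂ l * (y (Jf l) - x (Jf l))) • (Pi.single (If l) 1 : Fin (n + 1) → R)
            - (f₂ l * (y (If l) - x (If l))) • (Pi.single (Jf l) 1 : Fin (n + 1) → R)))
        = ∑ l, f₂ l • (g₂ l : R) := by
          refine Finset.sum_congr rfl fun l _ => ?_
          simp only [dotProduct_sub, dotProduct_smul, dotProduct_single, smul_eq_mul]
          rw [hgv l]
          ring
      _ = v := hg₂
  -- a ⬝ d = 0
  have had : a ⬝ᵥ d = 0 := by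
    rw [ha, dotP_sum]
    refine Finset.sum_eq_zero fun l _ => ?_
    rw [single_dotProduct]
    have : d (ι l) = 0 := by
      rw [hd]
      simp only [hz]
      rw [if_pos (hι l)]
      ring
    rw [this, mul_zero]
  -- T ⬝ d = 0
  have hTd : T ⬝ᵥ d = 0 := by
    rw [hT, dotP_sum]
    refine Finset.sum_eq_zero fun l _ => ?_
    simp only [sub_dotProduct, smul_dotProduct, single_dotProduct, smul_eq_mul]
    have hdI : d (If l) = y (If l) - x (If l) := by
      rw [hd]
      simp only [hz]
      rw [if_neg (Nat.not_lt.mpr (hIk l))]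
    have hdJ : d (Jf l) = y (Jf l) - x (Jf l) := by
      rw [hd]
      simp only [hz]
      rw [if_neg (Nat.not_lt.mpr (hJk l))]
    rw [hdI, hdJ]
    ring
  set cs : Fin (n + 1) → R := a + T with hcs
  have hcx : cs ⬝ᵥ x = 1 := by
    rw [hcs, add_dotProduct, dotProduct_comm a x, dotProduct_comm T x, hax, hxT, huv]
  have hcd : cs ⬝ᵥ d = 0 := by
    rw [hcs, add_dotProduct, had, hTd, add_zero]
  refine ⟨1 + vecMulVec cs d, mem_suslin (by omega) cs x d hcx hcd, ?_⟩
  rw [Matrix.vecMul_add, Matrix.vecMul_one]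
  have hvm : Matrix.vecMul x (vecMulVec cs d) = (x ⬝ᵥ cs) • d := by
    funext j
    simp only [Matrix.vecMul, dotProduct, vecMulVec_apply, Pi.smul_apply, smul_eq_mul,
      Finset.sum_mul]
    exact Finset.sum_congr rfl fun i _ => by ring
  rw [hvm, dotProduct_comm, hcx, one_smul]
  funext i
  simp only [Pi.add_apply, hd, hz]
  ring
end

section
/- Let R be a commutative local ring, m ≥ n ≥ 1, and V ∈ SpUm_{2n,2m}(R). Then V is completable to an elementary symplectic matrix: there exists W ∈ ESp_{2m}(R) whose first 2n rows equal V. -/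
open Matrix Polynomial

/-- The permutation `σ` of the indices `{0, …, 2m-1}` (0-indexed) pairing `2i ↔ 2i+1`. -/
def sigmaPerm (m : ℕ) (i : Fin (2 * m)) : Fin (2 * m) :=
  if h : i.val % 2 = 0 then ⟨i.val + 1, by have := i.isLt; omega⟩
  else ⟨i.val - 1, by have := i.isLt; omega⟩

/-- The standard alternating form `ψ_m = ψ_1 ⊥ ⋯ ⊥ ψ_1`, where `ψ_1 = [[0,1],[-1,0]]`. -/
def psiMat (R : Type*) [CommRing R] (m : ℕ) : Matrix (Fin (2 * m)) (Fin (2 * m)) R :=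
  Matrix.of fun i j =>
    if i.val % 2 = 0 ∧ j.val = i.val + 1 then 1
    else if j.val % 2 = 0 ∧ i.val = j.val + 1 then -1
    else 0

/-- `A` is a symplectic `2m × 2m` matrix: `Aᵀ ψ_m A = ψ_m`. -/
def IsSymplectic {R : Type*} [CommRing R] {m : ℕ} (A : Matrix (Fin (2 * m)) (Fin (2 * m)) R) :
    Prop :=
  Aᵀ * psiMat R m * A = psiMat R m

/-- The elementary symplectic matrix `se_ij(z)`. -/
def sympE {R : Type*} [CommRing R] (m : ℕ) (i j : Fin (2 * m)) (z : R) :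
    Matrix (Fin (2 * m)) (Fin (2 * m)) R :=
  if i = sigmaPerm m j then 1 + Matrix.single i j z
  else 1 + Matrix.single i j z -
    (-1 : R) ^ (i.val + j.val) • Matrix.single (sigmaPerm m j) (sigmaPerm m i) z

/-- `ESpGroup R m` is the elementary symplectic group `ESp_{2m}(R)` generated by the
matrices `se_ij(z)`, `i ≠ j` (realised as the multiplicative closure; every generator's
inverse is again a generator). -/
def ESpGroup (R : Type*) [CommRing R] (m : ℕ) :
    Submonoid (Matrix (Fin (2 * m)) (Fin (2 * m)) R) :=
  Submonoid.closure {A | ∃ (i j : Fin (2 * m)) (z : R), i ≠ j ∧ A = sympE m i j z}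

set_option maxHeartbeats 1600000

namespace Stmt7Aux

variable {R : Type*} [CommRing R]



lemma sigmaPerm_val {m : ℕ} (i : Fin (2*m)) :
    (sigmaPerm m i).val = if i.val % 2 = 0 then i.val + 1 else i.val - 1 := by
  unfold sigmaPerm; split <;> simp_all

lemma sigmaPerm_sigmaPerm {m : ℕ} (i : Fin (2*m)) : sigmaPerm m (sigmaPerm m i) = i := by
  apply Fin.ext
  simp only [sigmaPerm_val]
  have := i.isLt
  split_ifs <;> omega

lemma sigmaPerm_ne {m : ℕ} (i : Fin (2*m)) : sigmaPerm m i ≠ i := by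
  intro h
  have := congrArg Fin.val h
  rw [sigmaPerm_val] at this
  split_ifs at this <;> omega

lemma sigmaPerm_eq_iff {m : ℕ} {i j : Fin (2*m)} : i = sigmaPerm m j ↔ j = sigmaPerm m i :=
  ⟨fun h => by rw [h, sigmaPerm_sigmaPerm], fun h => by rw [h, sigmaPerm_sigmaPerm]⟩

lemma neg_one_pow_sigmaPerm {m : ℕ} (i : Fin (2*m)) :
    ((-1 : R) ^ ((sigmaPerm m i : ℕ))) = -((-1) ^ (i : ℕ)) := by
  rcases Nat.even_or_odd (i : ℕ) with he | ho
  · have h2 : (i : ℕ) % 2 = 0 := Nat.even_iff.mp he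
    have : ((sigmaPerm m i : ℕ)) = (i : ℕ) + 1 := by rw [sigmaPerm_val, if_pos h2]
    rw [this, he.neg_one_pow, pow_succ, he.neg_one_pow, one_mul]
  · have h2 : ¬ ((i : ℕ) % 2 = 0) := by rw [Nat.odd_iff] at ho; omega
    have h1 : (1:ℕ) ≤ (i:ℕ) := by omega
    have hv : ((sigmaPerm m i : ℕ)) = (i : ℕ) - 1 := by rw [sigmaPerm_val, if_neg h2]
    have he' : Even ((i:ℕ) - 1) := by
      have : Odd (i:ℕ) := ho
      rcases this with ⟨k, hk⟩; exact ⟨k, by omega⟩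
    rw [hv, he'.neg_one_pow, ho.neg_one_pow, neg_neg]

lemma psiMat_apply {m : ℕ} (k l : Fin (2*m)) :
    psiMat R m k l = if (l : ℕ) = ((sigmaPerm m k : ℕ)) then ((-1 : R) ^ (k : ℕ)) else 0 := by
  have hk := k.isLt
  have hl := l.isLt
  rcases Nat.even_or_odd (k : ℕ) with he | ho
  · have h2 : (k : ℕ) % 2 = 0 := Nat.even_iff.mp he
    rw [he.neg_one_pow]
    show (if (k:ℕ) % 2 = 0 ∧ (l:ℕ) = (k:ℕ) + 1 then (1:R)
      else if (l:ℕ) % 2 = 0 ∧ (k:ℕ) = (l:ℕ) + 1 then -1 else 0) = _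
    rw [sigmaPerm_val, if_pos h2]
    split_ifs <;> first | rfl | omega | (exfalso; omega)
  · have h2 : ¬((k : ℕ) % 2 = 0) := by rw [Nat.odd_iff] at ho; omega
    rw [ho.neg_one_pow]
    show (if (k:ℕ) % 2 = 0 ∧ (l:ℕ) = (k:ℕ) + 1 then (1:R)
      else if (l:ℕ) % 2 = 0 ∧ (k:ℕ) = (l:ℕ) + 1 then -1 else 0) = _
    rw [sigmaPerm_val, if_neg h2]
    split_ifs <;> first | rfl | omega | (exfalso; omega)

lemma psiMat_apply' {m : ℕ} (k l : Fin (2*m)) :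
    psiMat R m k l = if l = sigmaPerm m k then ((-1 : R) ^ (k : ℕ)) else 0 := by
  rw [psiMat_apply]
  congr 1
  simp [Fin.ext_iff]

lemma sigmaPerm_inj {m : ℕ} {i j : Fin (2*m)} (h : sigmaPerm m i = sigmaPerm m j) : i = j := by
  have := congrArg (sigmaPerm m) h
  rwa [sigmaPerm_sigmaPerm, sigmaPerm_sigmaPerm] at this

lemma stdBasis_mul_psi {m : ℕ} (a b : Fin (2*m)) (c : R) :
    Matrix.single a b c * psiMat R m
      = Matrix.single a (sigmaPerm m b) (c * (-1) ^ (b : ℕ)) := by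
  ext x y
  rw [mul_apply, Finset.sum_eq_single b]
  · rw [psiMat_apply']
    by_cases hy : y = sigmaPerm m b
    · subst hy; simp [Matrix.single, of_apply]
    · rw [if_neg hy]
      simp only [Matrix.single, of_apply, mul_zero]
      rw [if_neg (by tauto)]
  · intro k _ hk
    rw [psiMat_apply']
    by_cases hy : y = sigmaPerm m k
    · simp only [Matrix.single, of_apply]
      rw [if_neg (by tauto), zero_mul]
    · rw [if_neg hy, mul_zero]
  · intro h; exact absurd (Finset.mem_univ b) h

lemma psi_mul_stdBasis {m : ℕ} (a b : Fin (2*m)) (c : R) :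
    psiMat R m * Matrix.single a b c
      = Matrix.single (sigmaPerm m a) b (-((-1) ^ (a : ℕ)) * c) := by
  ext x y
  rw [mul_apply, Finset.sum_eq_single a]
  · rw [psiMat_apply']
    by_cases hx : a = sigmaPerm m x
    · have hx' : x = sigmaPerm m a := sigmaPerm_eq_iff.mp hx
      rw [if_pos hx]
      subst hx'
      rw [neg_one_pow_sigmaPerm]
      simp [Matrix.single, of_apply]
    · rw [if_neg hx, zero_mul]
      have hx2 : ¬ (sigmaPerm m a = x) := fun h => hx (sigmaPerm_eq_iff.mpr h.symm)
      simp only [Matrix.single, of_apply]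
      rw [if_neg (by tauto)]
  · intro k _ hk
    simp only [Matrix.single, of_apply]
    rw [if_neg (by tauto), mul_zero]
  · intro h; exact absurd (Finset.mem_univ a) h

lemma transpose_stdBasis {N : Type*} [DecidableEq N] (a b : N) (c : R) :
    (Matrix.single a b c)ᵀ = Matrix.single b a c := by
  ext x y
  simp [Matrix.single, of_apply, and_comm]

lemma stdBasis_sum_zero {N : Type*} [DecidableEq N] [Fintype N] (a b : N) (c d : R)
    (h : c + d = 0) : Matrix.single a b c + Matrix.single a b d = 0 := by
  rw [← Matrix.single_add, h, Matrix.single_zero]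

lemma sympE_eq {m : ℕ} (i j : Fin (2*m)) (z : R) (h : ¬ (i = sigmaPerm m j)) :
    sympE m i j z = 1 + Matrix.single i j z
      - Matrix.single (sigmaPerm m j) (sigmaPerm m i) ((-1 : R) ^ ((i:ℕ) + (j:ℕ)) * z) := by
  unfold sympE
  rw [if_neg h, Matrix.smul_single, smul_eq_mul]

lemma sympE_transpose {m : ℕ} (i j : Fin (2*m)) (z : R) :
    (sympE m i j z)ᵀ = sympE m j i z := by
  by_cases h : i = sigmaPerm m j
  · unfold sympE
    rw [if_pos h, if_pos (sigmaPerm_eq_iff.mp h)]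
    rw [transpose_add, transpose_one, transpose_stdBasis]
  · have h' : ¬ (j = sigmaPerm m i) := fun hh => h (sigmaPerm_eq_iff.mpr hh)
    rw [sympE_eq i j z h, sympE_eq j i z h']
    rw [transpose_sub, transpose_add, transpose_one, transpose_stdBasis, transpose_stdBasis]
    rw [Nat.add_comm (j:ℕ) (i:ℕ)]

lemma sympE_mul_neg {m : ℕ} (i j : Fin (2*m)) (hij : i ≠ j) (z : R) :
    sympE m i j z * sympE m i j (-z) = 1 := by
  by_cases h : i = sigmaPerm m j
  · unfold sympE
    rw [if_pos h, if_pos h]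
    have expand : (1 + Matrix.single i j z) * (1 + Matrix.single i j (-z))
        = 1 + (Matrix.single i j z + Matrix.single i j (-z))
          + Matrix.single i j z * Matrix.single i j (-z) := by noncomm_ring
    rw [expand, Matrix.single_mul_single_of_ne (h := hij.symm), stdBasis_sum_zero _ _ _ _ (by ring)]
    simp
  · rw [sympE_eq i j z h, sympE_eq i j (-z) h]
    have h1 : j ≠ i := hij.symm
    have h2 : j ≠ sigmaPerm m j := fun hh => (sigmaPerm_ne j) hh.symm
    have h3 : sigmaPerm m i ≠ i := sigmaPerm_ne i
    have h4 : sigmaPerm m i ≠ sigmaPerm m j := fun hh => hij (sigmaPerm_inj hh)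
    have expand : ∀ (a b c d : Matrix (Fin (2*m)) (Fin (2*m)) R),
        (1 + a - b) * (1 + c - d)
        = 1 + (a + c) - (b + d) + a * c - a * d - b * c + b * d := by
      intro a b c d; noncomm_ring
    rw [expand]
    rw [Matrix.single_mul_single_of_ne (h := h1), Matrix.single_mul_single_of_ne (h := h2),
      Matrix.single_mul_single_of_ne (h := h3), Matrix.single_mul_single_of_ne (h := h4)]
    rw [stdBasis_sum_zero _ _ _ _ (by ring), stdBasis_sum_zero _ _ _ _ (by ring)]
    simp

lemma neg_one_pow_cancel (a b : ℕ) : ((-1:R) ^ (a + b)) * (-1) ^ b = (-1) ^ a := by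
  rw [pow_add, mul_assoc, ← pow_add]
  have : Even (b + b) := ⟨b, rfl⟩
  rw [this.neg_one_pow, mul_one]

lemma sympE_sp {m : ℕ} (i j : Fin (2*m)) (hij : i ≠ j) (z : R) :
    (sympE m i j z)ᵀ * psiMat R m * sympE m i j z = psiMat R m := by
  rw [sympE_transpose]
  by_cases h : i = sigmaPerm m j
  · have hji : j = sigmaPerm m i := sigmaPerm_eq_iff.mp h
    unfold sympE
    rw [if_pos hji, if_pos h]
    have expand : (1 + Matrix.single j i z) * psiMat R m * (1 + Matrix.single i j z)
        = psiMat R m + psiMat R m * Matrix.single i j z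
          + Matrix.single j i z * psiMat R m
          + Matrix.single j i z * (psiMat R m * Matrix.single i j z) := by noncomm_ring
    rw [expand, psi_mul_stdBasis, stdBasis_mul_psi, ← hji]
    rw [Matrix.single_mul_single_of_ne (h := hij), add_zero, add_assoc,
      stdBasis_sum_zero _ _ _ _ (by ring), add_zero]
  · have h' : ¬ (j = sigmaPerm m i) := fun hh => h (sigmaPerm_eq_iff.mpr hh)
    rw [sympE_eq i j z h, sympE_eq j i z h']
    have expand : ∀ (a b c d P : Matrix (Fin (2*m)) (Fin (2*m)) R),
        (1 + a - b) * P * (1 + c - d)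
        = P + ((P * c - P * d) + (a * P - b * P))
          + (a * (P * c) - a * (P * d) - b * (P * c) + b * (P * d)) := by
      intro a b c d P; noncomm_ring
    rw [expand]
    rw [psi_mul_stdBasis i j z, psi_mul_stdBasis (sigmaPerm m j) (sigmaPerm m i) _,
      stdBasis_mul_psi j i z, stdBasis_mul_psi (sigmaPerm m i) (sigmaPerm m j) _]
    rw [sigmaPerm_sigmaPerm j]
    have hne1 : i ≠ sigmaPerm m i := fun hh => sigmaPerm_ne i hh.symm
    have hne2 : i ≠ j := hij
    have hne3 : sigmaPerm m j ≠ sigmaPerm m i := fun hh => hij.symm (sigmaPerm_inj hh)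
    have hne4 : sigmaPerm m j ≠ j := sigmaPerm_ne j
    rw [Matrix.single_mul_single_of_ne (h := hne1), Matrix.single_mul_single_of_ne (h := hne2),
      Matrix.single_mul_single_of_ne (h := hne3), Matrix.single_mul_single_of_ne (h := hne4)]
    have hpow : ((-1:R) ^ ((sigmaPerm m j : ℕ))) = -(-1) ^ (j:ℕ) := neg_one_pow_sigmaPerm j
    have hcan : ((-1:R) ^ ((i:ℕ)+(j:ℕ))) * (-1) ^ (j:ℕ) = (-1) ^ (i:ℕ) := neg_one_pow_cancel _ _
    have e1 : Matrix.single (sigmaPerm m i) j (-(-1:R) ^ (i:ℕ) * z)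
        - Matrix.single j (sigmaPerm m i)
            (-(-1:R) ^ ((sigmaPerm m j : ℕ)) * ((-1) ^ ((i:ℕ)+(j:ℕ)) * z))
        + (Matrix.single j (sigmaPerm m i) (z * (-1:R) ^ (i:ℕ))
        - Matrix.single (sigmaPerm m i) j
            ((-1:R) ^ ((j:ℕ)+(i:ℕ)) * z * (-1) ^ ((sigmaPerm m j : ℕ)))) = 0 := by
      have v1 : (-(-1:R) ^ ((sigmaPerm m j : ℕ))) * ((-1) ^ ((i:ℕ)+(j:ℕ)) * z)
          = z * (-1:R) ^ (i:ℕ) := by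
        rw [hpow, neg_neg]
        calc ((-1:R) ^ (j:ℕ)) * ((-1) ^ ((i:ℕ)+(j:ℕ)) * z)
            = ((-1:R) ^ ((i:ℕ)+(j:ℕ)) * (-1) ^ (j:ℕ)) * z := by ring
          _ = _ := by rw [hcan]; ring
      have v2 : ((-1:R) ^ ((j:ℕ)+(i:ℕ))) * z * (-1) ^ ((sigmaPerm m j : ℕ))
          = -(-1:R) ^ (i:ℕ) * z := by
        rw [hpow, Nat.add_comm (j:ℕ) (i:ℕ)]
        calc ((-1:R) ^ ((i:ℕ)+(j:ℕ))) * z * (-(-1) ^ (j:ℕ))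
            = -(((-1:R) ^ ((i:ℕ)+(j:ℕ)) * (-1) ^ (j:ℕ)) * z) := by ring
          _ = _ := by rw [hcan]; ring
      rw [v1, v2]
      abel
    rw [e1]
    simp

lemma mem_gen {m : ℕ} (i j : Fin (2*m)) (hij : i ≠ j) (z : R) :
    sympE m i j z ∈ ESpGroup R m :=
  Submonoid.subset_closure ⟨i, j, z, hij, rfl⟩

lemma esp_inv {m : ℕ} {E : Matrix (Fin (2*m)) (Fin (2*m)) R} (hE : E ∈ ESpGroup R m) :
    ∃ F, F ∈ ESpGroup R m ∧ E * F = 1 ∧ F * E = 1 := by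
  induction hE using Submonoid.closure_induction with
  | mem x hx =>
    obtain ⟨i, j, z, hij, rfl⟩ := hx
    refine ⟨sympE m i j (-z), mem_gen i j hij (-z), sympE_mul_neg i j hij z, ?_⟩
    have := sympE_mul_neg i j hij (-z)
    rwa [neg_neg] at this
  | one => exact ⟨1, one_mem _, one_mul 1, one_mul 1⟩
  | mul x y hx hy ihx ihy =>
    obtain ⟨Fx, hFx, hx1, hx2⟩ := ihx
    obtain ⟨Fy, hFy, hy1, hy2⟩ := ihy
    refine ⟨Fy * Fx, mul_mem hFy hFx, ?_, ?_⟩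
    · have e : x * y * (Fy * Fx) = x * (y * Fy) * Fx := by noncomm_ring
      rw [e, hy1, mul_one, hx1]
    · have e : Fy * Fx * (x * y) = Fy * (Fx * x) * y := by noncomm_ring
      rw [e, hx2, mul_one, hy2]

lemma esp_sp {m : ℕ} {E : Matrix (Fin (2*m)) (Fin (2*m)) R} (hE : E ∈ ESpGroup R m) :
    Eᵀ * psiMat R m * E = psiMat R m ∧ E * psiMat R m * Eᵀ = psiMat R m := by
  induction hE using Submonoid.closure_induction with
  | mem x hx =>
    obtain ⟨i, j, z, hij, rfl⟩ := hx
    refine ⟨sympE_sp i j hij z, ?_⟩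
    have h2 := sympE_sp j i hij.symm z
    rw [sympE_transpose] at h2
    rw [sympE_transpose]
    exact h2
  | one => constructor <;> simp
  | mul x y hx hy ihx ihy =>
    obtain ⟨ihx1, ihx2⟩ := ihx
    obtain ⟨ihy1, ihy2⟩ := ihy
    constructor
    · have e : (x*y)ᵀ * psiMat R m * (x*y) = yᵀ * (xᵀ * psiMat R m * x) * y := by
        rw [transpose_mul]
        noncomm_ring
      rw [e, ihx1, ihy1]
    · have e : (x*y) * psiMat R m * (x*y)ᵀ = x * (y * psiMat R m * yᵀ) * xᵀ := by
        rw [transpose_mul]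
        noncomm_ring
      rw [e, ihy2, ihx2]

lemma vecMul_stdBasis {N : Type*} [Fintype N] [DecidableEq N] (u : N → R) (a b : N) (z : R)
    (c : N) : (u ᵥ* Matrix.single a b z) c = if c = b then u a * z else 0 := by
  simp only [vecMul, dotProduct, Matrix.single, of_apply]
  rw [Finset.sum_eq_single a]
  · by_cases hc : c = b
    · subst hc; simp
    · rw [if_neg hc, if_neg (by tauto), mul_zero]
  · intro k _ hk; rw [if_neg (by tauto), mul_zero]
  · intro h; exact absurd (Finset.mem_univ a) h

lemma vecMul_sympE₁ {m : ℕ} (i j : Fin (2*m)) (h : i = sigmaPerm m j) (u : Fin (2*m) → R)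
    (z : R) (c : Fin (2*m)) :
    (u ᵥ* sympE m i j z) c = u c + if c = j then u i * z else 0 := by
  unfold sympE
  rw [if_pos h, Matrix.vecMul_add, Matrix.vecMul_one, Pi.add_apply, vecMul_stdBasis]

lemma vecMul_sympE₂ {m : ℕ} (i j : Fin (2*m)) (h : ¬ (i = sigmaPerm m j)) (u : Fin (2*m) → R)
    (z : R) (c : Fin (2*m)) :
    (u ᵥ* sympE m i j z) c = u c + (if c = j then u i * z else 0)
      - (if c = sigmaPerm m i then u (sigmaPerm m j) * ((-1 : R) ^ ((i:ℕ)+(j:ℕ)) * z) else 0) := by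
  rw [sympE_eq i j z h, Matrix.vecMul_sub, Matrix.vecMul_add, Matrix.vecMul_one, Pi.sub_apply,
    Pi.add_apply, vecMul_stdBasis, vecMul_stdBasis]

lemma sigma_val_eq {m : ℕ} (i : Fin (2*m)) (a : ℕ) (h2 : (i:ℕ) % 2 = 0 → a = (i:ℕ) + 1)
    (h3 : (i:ℕ) % 2 = 1 → a = (i:ℕ) - 1) : ((sigmaPerm m i : ℕ)) = a := by
  rw [sigmaPerm_val]
  split_ifs with h
  · omega
  · have := h3 (by omega); omega

lemma clear {m : ℕ} (hm : 1 ≤ m) (c : R) (hc : IsUnit c) (e : ℕ) :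
    e + 1 ≤ m → ∀ u : Fin (2*m) → R, u ⟨1, by omega⟩ = c →
    ∃ E ∈ ESpGroup R m,
      (∀ j : Fin (2*m), 2*(m-e) ≤ (j:ℕ) → (u ᵥ* E) j = 0) ∧
      (∀ j : Fin (2*m), 1 ≤ (j:ℕ) → (j:ℕ) < 2*(m-e) → (u ᵥ* E) j = u j) ∧
      (∀ v : Fin (2*m) → R, v ⟨1, by omega⟩ = 0 →
        (∀ j : Fin (2*m), 2*(m-e) ≤ (j:ℕ) → v j = 0) → v ᵥ* E = v) := by
  induction e with
  | zero =>
    intro _ u _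
    refine ⟨1, one_mem _, ?_, ?_, ?_⟩
    · intro j hj; exact absurd j.isLt (by omega)
    · intro j _ _; rw [Matrix.vecMul_one]
    · intro v _ _; rw [Matrix.vecMul_one]
  | succ e ih =>
    intro he u hu
    set i1 : Fin (2*m) := ⟨1, by omega⟩ with hi1
    set t : Fin (2*m) := ⟨2*(m-e-1), by omega⟩ with ht
    set t' : Fin (2*m) := ⟨2*(m-e-1)+1, by omega⟩ with ht'
    have htv : (t : ℕ) = 2*(m-e-1) := rfl
    have ht'v : (t' : ℕ) = 2*(m-e-1)+1 := rfl
    have hi1v : (i1 : ℕ) = 1 := rfl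
    have ht2 : 2 ≤ (t : ℕ) := by omega
    have hσt : ((sigmaPerm m t : ℕ)) = 2*(m-e-1)+1 := by
      apply sigma_val_eq <;> omega
    have hσt' : ((sigmaPerm m t' : ℕ)) = 2*(m-e-1) := by
      apply sigma_val_eq <;> omega
    have hσi1 : ((sigmaPerm m i1 : ℕ)) = 0 := by
      apply sigma_val_eq <;> omega
    have hn1 : ¬ (i1 = sigmaPerm m t) := by
      intro hh; have := congrArg Fin.val hh; rw [hσt] at this; omega
    have hn2 : ¬ (i1 = sigmaPerm m t') := by
      intro hh; have := congrArg Fin.val hh; rw [hσt'] at this; omega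
    have hne1 : i1 ≠ t := by intro hh; have := congrArg Fin.val hh; omega
    have hne2 : i1 ≠ t' := by intro hh; have := congrArg Fin.val hh; omega
    have hcu : c * ↑hc.unit⁻¹ = 1 := hc.mul_val_inv
    obtain ⟨z1, hz1⟩ : ∃ z1 : R, z1 = -(↑hc.unit⁻¹ * u t) := ⟨_, rfl⟩
    obtain ⟨z2, hz2⟩ : ∃ z2 : R, z2 = -(↑hc.unit⁻¹ * u t') := ⟨_, rfl⟩
    obtain ⟨G1, hG1⟩ : ∃ G1, G1 = sympE m i1 t z1 := ⟨_, rfl⟩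
    obtain ⟨G2, hG2⟩ : ∃ G2, G2 = sympE m i1 t' z2 := ⟨_, rfl⟩
    obtain ⟨u1, hu1⟩ : ∃ u1, u1 = u ᵥ* G1 := ⟨_, rfl⟩
    obtain ⟨u2, hu2⟩ : ∃ u2, u2 = u1 ᵥ* G2 := ⟨_, rfl⟩
    -- u1 facts
    have hu1x : ∀ x : Fin (2*m), (x:ℕ) ≠ 2*(m-e-1) → (x:ℕ) ≠ 0 → u1 x = u x := by
      intro x hx1 hx2
      rw [hu1, hG1, vecMul_sympE₂ i1 t hn1]
      rw [if_neg (fun hh => hx1 (by rw [hh])),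
        if_neg (fun hh => hx2 (by rw [hh, hσi1]))]
      ring
    have hu1t : u1 t = 0 := by
      rw [hu1, hG1, vecMul_sympE₂ i1 t hn1, if_pos rfl,
        if_neg (fun hh => by have := congrArg Fin.val hh; rw [hσi1] at this; omega)]
      rw [hu, hz1]
      have : c * -(↑hc.unit⁻¹ * u t) = -((c * ↑hc.unit⁻¹) * u t) := by ring
      rw [this, hcu]; ring
    -- u2 facts
    have hu2x : ∀ x : Fin (2*m), (x:ℕ) ≠ 2*(m-e-1)+1 → (x:ℕ) ≠ 0 → u2 x = u1 x := by
      intro x hx1 hx2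
      rw [hu2, hG2, vecMul_sympE₂ i1 t' hn2]
      rw [if_neg (fun hh => hx1 (by rw [hh])),
        if_neg (fun hh => hx2 (by rw [hh, hσi1]))]
      ring
    have hu21 : u2 i1 = c := by
      rw [hu2x i1 (by omega) (by omega), hu1x i1 (by omega) (by omega), hu]
    have hu2t : u2 t = 0 := by
      rw [hu2x t (by omega) (by omega), hu1t]
    have hu2t' : u2 t' = 0 := by
      rw [hu2, hG2, vecMul_sympE₂ i1 t' hn2, if_pos rfl,
        if_neg (fun hh => by have := congrArg Fin.val hh; rw [hσi1] at this; omega)]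
      rw [hu1x i1 (by omega) (by omega), hu1x t' (by omega) (by omega), hu, hz2]
      have : c * -(↑hc.unit⁻¹ * u t') = -((c * ↑hc.unit⁻¹) * u t') := by ring
      rw [this, hcu]; ring
    obtain ⟨E', hE'mem, hE'zero, hE'keep, hE'fix⟩ := ih (by omega) u2 hu21
    refine ⟨G1 * (G2 * E'), mul_mem (hG1 ▸ mem_gen i1 t hne1 z1)
      (mul_mem (hG2 ▸ mem_gen i1 t' hne2 z2) hE'mem), ?_, ?_, ?_⟩
    · intro j hj
      rw [← Matrix.vecMul_vecMul, ← Matrix.vecMul_vecMul, ← hu1, ← hu2]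
      by_cases hjb : 2*(m-e) ≤ (j:ℕ)
      · exact hE'zero j hjb
      · have hj1 : 1 ≤ (j:ℕ) := by omega
        rw [hE'keep j hj1 (by omega)]
        have : (j:ℕ) = 2*(m-e-1) ∨ (j:ℕ) = 2*(m-e-1)+1 := by omega
        rcases this with hh | hh
        · rw [show j = t from Fin.ext hh, hu2t]
        · rw [show j = t' from Fin.ext hh, hu2t']
    · intro j hj1 hj2
      rw [← Matrix.vecMul_vecMul, ← Matrix.vecMul_vecMul, ← hu1, ← hu2]
      rw [hE'keep j hj1 (by omega), hu2x j (by omega) (by omega),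
        hu1x j (by omega) (by omega)]
    · intro v hv1 hv0
      rw [← Matrix.vecMul_vecMul, ← Matrix.vecMul_vecMul]
      have hvG1 : v ᵥ* G1 = v := by
        funext x
        rw [hG1, vecMul_sympE₂ i1 t hn1, hv1]
        have hvσt : v (sigmaPerm m t) = 0 := by
          apply hv0; rw [hσt]; omega
        rw [hvσt]
        simp
      have hvG2 : v ᵥ* G2 = v := by
        funext x
        rw [hG2, vecMul_sympE₂ i1 t' hn2, hv1]
        have hvσt : v (sigmaPerm m t') = 0 := by
          apply hv0; rw [hσt']; omega
        rw [hvσt]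
        simp
      rw [hvG1, hvG2]
      exact hE'fix v hv1 (fun j hj => hv0 j (by omega))

lemma sigma_zero {m : ℕ} (hm : 1 ≤ m) :
    sigmaPerm m ⟨0, by omega⟩ = (⟨1, by omega⟩ : Fin (2*m)) :=
  Fin.ext (sigma_val_eq _ _ (fun _ => rfl) (fun h => by simp at h))

lemma sigma_one {m : ℕ} (hm : 1 ≤ m) :
    sigmaPerm m ⟨1, by omega⟩ = (⟨0, by omega⟩ : Fin (2*m)) :=
  Fin.ext (sigma_val_eq _ _ (fun h => by simp at h) (fun _ => rfl))

lemma bump {m : ℕ} (hm : 1 ≤ m) (u : Fin (2*m) → R) (k : Fin (2*m))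
    (hk : k ≠ ⟨1, by omega⟩) (z : R) :
    (u ᵥ* sympE m k ⟨1, by omega⟩ z) ⟨1, by omega⟩ = u ⟨1, by omega⟩ + u k * z := by
  by_cases h : k = sigmaPerm m ⟨1, by omega⟩
  · rw [vecMul_sympE₁ _ _ h, if_pos rfl]
  · rw [vecMul_sympE₂ _ _ h, if_pos rfl]
    have : ¬ ((⟨1, by omega⟩ : Fin (2*m)) = sigmaPerm m k) := by
      intro hh
      exact h (sigmaPerm_eq_iff.mp hh)
    rw [if_neg this]
    ring

lemma rowA {m : ℕ} (hm : 1 ≤ m) (u : Fin (2*m) → R) (hu : ∃ k, IsUnit (u k)) :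
    ∃ E ∈ ESpGroup R m, ∀ x : Fin (2*m), (u ᵥ* E) x = if (x:ℕ) = 0 then 1 else 0 := by
  -- Step 0: make entry 1 a unit
  have step0 : ∃ E₀ ∈ ESpGroup R m, IsUnit ((u ᵥ* E₀) ⟨1, by omega⟩) := by
    by_cases h1 : IsUnit (u ⟨1, by omega⟩)
    · exact ⟨1, one_mem _, by rwa [Matrix.vecMul_one]⟩
    · obtain ⟨k, hk⟩ := hu
      have hkne : k ≠ ⟨1, by omega⟩ := by
        intro hh; rw [hh] at hk; exact h1 hk
      refine ⟨sympE m k ⟨1, by omega⟩ (↑hk.unit⁻¹ * (1 - u ⟨1, by omega⟩)),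
        mem_gen _ _ hkne _, ?_⟩
      rw [bump hm u k hkne]
      have : u k * (↑hk.unit⁻¹ * (1 - u ⟨1, by omega⟩))
          = (u k * ↑hk.unit⁻¹) * (1 - u ⟨1, by omega⟩) := by ring
      rw [this, hk.mul_val_inv, one_mul]
      simpa using isUnit_one
  obtain ⟨E₀, hE₀, hcunit⟩ := step0
  obtain ⟨c, hc⟩ : ∃ c, c = (u ᵥ* E₀) ⟨1, by omega⟩ := ⟨_, rfl⟩
  rw [← hc] at hcunit
  obtain ⟨E₁, hE₁, hz, hkeep, _⟩ := clear hm c hcunit (m-1) (by omega) (u ᵥ* E₀) hc.symm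
  obtain ⟨u2, hu2⟩ : ∃ u2, u2 = (u ᵥ* E₀) ᵥ* E₁ := ⟨_, rfl⟩
  have hmm : 2*(m-(m-1)) = 2 := by omega
  have hu2z : ∀ j : Fin (2*m), 2 ≤ (j:ℕ) → u2 j = 0 := by
    intro j hj; rw [hu2]; exact hz j (by omega)
  have hu21 : u2 ⟨1, by omega⟩ = c := by
    rw [hu2, hkeep _ (by norm_num) (by show (1:ℕ) < 2*(m-(m-1)); omega), ← hc]
  obtain ⟨a, ha⟩ : ∃ a, a = u2 ⟨0, by omega⟩ := ⟨_, rfl⟩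
  -- Step 2 : make entry 0 equal to 1
  obtain ⟨G, hG⟩ : ∃ G, G = sympE m ⟨1, by omega⟩ ⟨0, by omega⟩ (↑hcunit.unit⁻¹ * (1 - a)) :=
    ⟨_, rfl⟩
  have hGmem : G ∈ ESpGroup R m := hG ▸ mem_gen _ _ (by intro hh; exact absurd (congrArg Fin.val hh) (by norm_num)) _
  obtain ⟨u3, hu3⟩ : ∃ u3, u3 = u2 ᵥ* G := ⟨_, rfl⟩
  have hG1 : (⟨1, by omega⟩ : Fin (2*m)) = sigmaPerm m ⟨0, by omega⟩ := (sigma_zero hm).symm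
  have hu3x : ∀ x : Fin (2*m), 1 ≤ (x:ℕ) → u3 x = u2 x := by
    intro x hx
    rw [hu3, hG, vecMul_sympE₁ _ _ hG1, if_neg (by intro hh; rw [hh] at hx; simp at hx), add_zero]
  have hu30 : u3 ⟨0, by omega⟩ = 1 := by
    rw [hu3, hG, vecMul_sympE₁ _ _ hG1, if_pos rfl, hu21, ← ha]
    have : c * (↑hcunit.unit⁻¹ * (1 - a)) = (c * ↑hcunit.unit⁻¹) * (1-a) := by ring
    rw [this, hcunit.mul_val_inv]
    ring
  -- Step 3 : kill entry 1
  obtain ⟨H, hH⟩ : ∃ H, H = sympE m ⟨0, by omega⟩ ⟨1, by omega⟩ (-c) := ⟨_, rfl⟩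
  have hHmem : H ∈ ESpGroup R m := hH ▸ mem_gen _ _ (by intro hh; exact absurd (congrArg Fin.val hh) (by norm_num)) _
  have hH1 : (⟨0, by omega⟩ : Fin (2*m)) = sigmaPerm m ⟨1, by omega⟩ := (sigma_one hm).symm
  refine ⟨E₀ * (E₁ * (G * H)), mul_mem hE₀ (mul_mem hE₁ (mul_mem hGmem hHmem)), ?_⟩
  intro x
  have hrw : (u ᵥ* (E₀ * (E₁ * (G * H)))) x = (u3 ᵥ* H) x := by
    rw [← Matrix.vecMul_vecMul, ← Matrix.vecMul_vecMul, ← Matrix.vecMul_vecMul, ← hu2, ← hu3]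
  rw [hrw, hH, vecMul_sympE₁ _ _ hH1]
  by_cases hx0 : (x:ℕ) = 0
  · have hxe : x = ⟨0, by omega⟩ := Fin.ext hx0
    rw [if_pos hx0, if_neg (by rw [hxe]; intro hh; exact absurd (congrArg Fin.val hh) (by norm_num)),
      add_zero, hxe, hu30]
  · rw [if_neg hx0]
    by_cases hx1 : (x:ℕ) = 1
    · have hxe : x = ⟨1, by omega⟩ := Fin.ext hx1
      rw [if_pos hxe, hu30, hxe, hu3x _ (by norm_num), hu21]
      ring
    · rw [if_neg (by intro hh; exact hx1 (by rw [hh])), add_zero,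
        hu3x _ (by omega), hu2z _ (by omega)]

lemma rowB {m : ℕ} (hm : 1 ≤ m) (v : Fin (2*m) → R) (hv : v ⟨1, by omega⟩ = 1) :
    ∃ E ∈ ESpGroup R m,
      (∀ x : Fin (2*m), (v ᵥ* E) x = if (x:ℕ) = 1 then 1 else 0) ∧
      ((fun x : Fin (2*m) => if (x:ℕ) = 0 then (1:R) else 0) ᵥ* E
        = fun x : Fin (2*m) => if (x:ℕ) = 0 then (1:R) else 0) := by
  obtain ⟨E₁, hE₁, hz, hkeep, hfix⟩ := clear hm 1 isUnit_one (m-1) (by omega) v hv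
  obtain ⟨v2, hv2⟩ : ∃ v2, v2 = v ᵥ* E₁ := ⟨_, rfl⟩
  have hv2z : ∀ j : Fin (2*m), 2 ≤ (j:ℕ) → v2 j = 0 := by
    intro j hj; rw [hv2]; exact hz j (by omega)
  have hv21 : v2 ⟨1, by omega⟩ = 1 := by
    rw [hv2, hkeep _ (by norm_num) (by show (1:ℕ) < 2*(m-(m-1)); omega), hv]
  obtain ⟨G, hG⟩ : ∃ G, G = sympE m ⟨1, by omega⟩ ⟨0, by omega⟩ (-(v2 ⟨0, by omega⟩)) := ⟨_, rfl⟩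
  have hGmem : G ∈ ESpGroup R m := hG ▸ mem_gen _ _ (by intro hh; exact absurd (congrArg Fin.val hh) (by norm_num)) _
  have hG1 : (⟨1, by omega⟩ : Fin (2*m)) = sigmaPerm m ⟨0, by omega⟩ := (sigma_zero hm).symm
  refine ⟨E₁ * G, mul_mem hE₁ hGmem, ?_, ?_⟩
  · intro x
    have hrw : (v ᵥ* (E₁ * G)) x = (v2 ᵥ* G) x := by
      rw [← Matrix.vecMul_vecMul, ← hv2]
    rw [hrw, hG, vecMul_sympE₁ _ _ hG1]
    by_cases hx0 : (x:ℕ) = 0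
    · have hxe : x = ⟨0, by omega⟩ := Fin.ext hx0
      rw [if_pos hxe, if_neg (by omega), hv21, hxe]
      ring
    · rw [if_neg (by intro hh; exact hx0 (by rw [hh])), add_zero]
      by_cases hx1 : (x:ℕ) = 1
      · have hxe : x = ⟨1, by omega⟩ := Fin.ext hx1
        rw [if_pos hx1, hxe, hv21]
      · rw [if_neg hx1, hv2z _ (by omega)]
  · obtain ⟨e0, he0⟩ : ∃ e0 : Fin (2*m) → R, e0 = fun x : Fin (2*m) => if (x:ℕ) = 0 then (1:R) else 0 :=
      ⟨_, rfl⟩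
    rw [← he0, ← Matrix.vecMul_vecMul]
    have h1 : e0 ᵥ* E₁ = e0 := by
      apply hfix
      · rw [he0]; norm_num
      · intro j hj; rw [he0]; simp only; rw [if_neg (by omega)]
    rw [h1, hG]
    funext x
    rw [vecMul_sympE₁ _ _ hG1]
    have : e0 ⟨1, by omega⟩ = 0 := by rw [he0]; norm_num
    rw [this]
    simp

lemma exists_unit {R : Type*} [CommRing R] [IsLocalRing R] {ι : Type*} [Fintype ι] (f : ι → R)
    (h : IsUnit (∑ i, f i)) : ∃ i, IsUnit (f i) := by
  by_contra hc
  push_neg at hc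
  have hmem : (∑ i, f i) ∈ IsLocalRing.maximalIdeal R :=
    Ideal.sum_mem _ (fun i _ => (IsLocalRing.mem_maximalIdeal _).mpr (hc i))
  exact (IsLocalRing.mem_maximalIdeal _).mp hmem h

lemma sum_shift {M : Type*} [AddCommMonoid M] (m : ℕ) (g : Fin (2*m) → M)
    (h : ∀ k : Fin (2*m), (k:ℕ) < 2 → g k = 0) :
    ∑ k, g k = ∑ k : Fin (2*(m-1)), g ⟨(k:ℕ)+2, by have := k.isLt; omega⟩ := by
  rcases Nat.eq_zero_or_pos m with rfl | hm
  · exact (Finset.sum_eq_zero (fun k _ => absurd k.isLt (by omega))).trans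
      (Finset.sum_eq_zero (fun k _ => absurd k.isLt (by omega))).symm
  · obtain ⟨G, hG⟩ : ∃ G : ℕ → M, G = fun k => if hk : k < 2*m then g ⟨k, hk⟩ else 0 := ⟨_, rfl⟩
    have h1 : ∑ k : Fin (2*m), g k = ∑ k : Fin (2*m), G (k:ℕ) := by
      apply Finset.sum_congr rfl
      intro k _
      rw [hG]
      simp only
      rw [dif_pos k.isLt]
    have h2 : ∑ k : Fin (2*(m-1)), g ⟨(k:ℕ)+2, by have := k.isLt; omega⟩
        = ∑ k : Fin (2*(m-1)), G ((k:ℕ)+2) := by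
      apply Finset.sum_congr rfl
      intro k _
      rw [hG]
      simp only
      rw [dif_pos (by have := k.isLt; omega : (k:ℕ)+2 < 2*m)]
    rw [h1, h2, Fin.sum_univ_eq_sum_range, Fin.sum_univ_eq_sum_range (fun k => G (k+2)),
      show 2*m = 2 + 2*(m-1) by omega, Finset.sum_range_add]
    have hr2 : ∑ i ∈ Finset.range 2, G i = 0 := by
      rw [Finset.sum_range_succ, Finset.sum_range_one, hG]
      simp only
      rw [dif_pos (by omega : 0 < 2*m), dif_pos (by omega : 1 < 2*m)]
      rw [h _ (by norm_num), h _ (by norm_num), add_zero]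
    rw [hr2, zero_add]
    apply Finset.sum_congr rfl
    intro x _
    rw [Nat.add_comm 2 x]

def embedM (R : Type*) [CommRing R] (m : ℕ)
    (A : Matrix (Fin (2*(m-1))) (Fin (2*(m-1))) R) : Matrix (Fin (2*m)) (Fin (2*m)) R :=
  Matrix.of fun i j =>
    if h : 2 ≤ (i:ℕ) ∧ 2 ≤ (j:ℕ) then
      A ⟨(i:ℕ)-2, by have := i.isLt; omega⟩ ⟨(j:ℕ)-2, by have := j.isLt; omega⟩
    else if (i:ℕ) = (j:ℕ) then 1 else 0

lemma embedM_low {m : ℕ} (A : Matrix (Fin (2*(m-1))) (Fin (2*(m-1))) R) (i j : Fin (2*m))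
    (h : (i:ℕ) < 2 ∨ (j:ℕ) < 2) :
    embedM R m A i j = if (i:ℕ) = (j:ℕ) then 1 else 0 := by
  unfold embedM
  rw [of_apply, dif_neg (by omega)]

lemma embedM_high {m : ℕ} (A : Matrix (Fin (2*(m-1))) (Fin (2*(m-1))) R) (i j : Fin (2*m))
    (hi : 2 ≤ (i:ℕ)) (hj : 2 ≤ (j:ℕ)) :
    embedM R m A i j = A ⟨(i:ℕ)-2, by have := i.isLt; omega⟩ ⟨(j:ℕ)-2, by have := j.isLt; omega⟩ := by
  unfold embedM
  rw [of_apply, dif_pos ⟨hi, hj⟩]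

lemma embedM_one {m : ℕ} : embedM R m 1 = 1 := by
  ext i j
  by_cases h : 2 ≤ (i:ℕ) ∧ 2 ≤ (j:ℕ)
  · rw [embedM_high _ _ _ h.1 h.2, Matrix.one_apply, Matrix.one_apply]
    by_cases hij : i = j
    · rw [if_pos hij, if_pos (by
        simp only [Fin.mk.injEq]
        rw [Fin.ext_iff] at hij
        omega)]
    · rw [if_neg hij, if_neg (fun hh => hij (by
        simp only [Fin.mk.injEq] at hh
        exact Fin.ext (by omega)))]
  · rw [embedM_low _ _ _ (by omega), Matrix.one_apply]
    by_cases hij : i = j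
    · rw [if_pos (by rw [hij]), if_pos hij]
    · rw [if_neg (fun hh => hij (Fin.ext hh)), if_neg hij]

lemma embedM_mul {m : ℕ} (A B : Matrix (Fin (2*(m-1))) (Fin (2*(m-1))) R) :
    embedM R m A * embedM R m B = embedM R m (A * B) := by
  ext i j
  rw [Matrix.mul_apply]
  by_cases hi : 2 ≤ (i:ℕ)
  · by_cases hj : 2 ≤ (j:ℕ)
    · rw [embedM_high _ _ _ hi hj, Matrix.mul_apply]
      rw [sum_shift m _ (fun k hk => by
        rw [embedM_low A i k (Or.inr hk), if_neg (by omega), zero_mul])]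
      apply Finset.sum_congr rfl
      intro k _
      rw [embedM_high A i _ hi (by simp), embedM_high B _ j (by simp) hj]
      congr 2 <;> · apply Fin.ext; simp
    · rw [embedM_low _ i j (Or.inr (by omega)), if_neg (by omega)]
      apply Finset.sum_eq_zero
      intro k _
      by_cases hk : 2 ≤ (k:ℕ)
      · rw [embedM_low B k j (Or.inr (by omega)), if_neg (by omega), mul_zero]
      · rw [embedM_low A i k (Or.inr (by omega)), if_neg (by omega), zero_mul]
  · rw [embedM_low _ i j (Or.inl (by omega))]
    rw [Finset.sum_eq_single i]
    · rw [embedM_low A i i (Or.inl (by omega)), if_pos rfl, one_mul,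
        embedM_low B i j (Or.inl (by omega))]
    · intro k _ hk
      rw [embedM_low A i k (Or.inl (by omega)),
        if_neg (fun hh => hk (Fin.ext hh.symm)), zero_mul]
    · intro hh; exact absurd (Finset.mem_univ i) hh

lemma sigma_shift {m : ℕ} (l : Fin (2*(m-1))) (h : (l:ℕ)+2 < 2*m) :
    ((sigmaPerm m ⟨(l:ℕ)+2, h⟩ : ℕ)) = ((sigmaPerm (m-1) l : ℕ)) + 2 := by
  rw [sigmaPerm_val, sigmaPerm_val]
  simp only [Fin.val_mk]
  have := l.isLt
  split_ifs <;> omega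

lemma sympE_apply {m : ℕ} (i j : Fin (2*m)) (z : R) (x y : Fin (2*m)) :
    sympE m i j z x y = (if x = y then 1 else 0) + (if x = i ∧ y = j then z else 0)
      - (if ¬ (i = sigmaPerm m j) ∧ x = sigmaPerm m j ∧ y = sigmaPerm m i
          then ((-1:R) ^ ((i:ℕ)+(j:ℕ)) * z) else 0) := by
  have flip : ∀ (p q : Fin (2*m)) (w : R),
      (if p = x ∧ q = y then w else 0) = (if x = p ∧ y = q then w else 0) := by
    intro p q w
    exact if_congr ⟨fun hh => ⟨hh.1.symm, hh.2.symm⟩, fun hh => ⟨hh.1.symm, hh.2.symm⟩⟩ rfl rfl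
  unfold sympE
  by_cases h : i = sigmaPerm m j
  · rw [if_pos h, Matrix.add_apply, Matrix.one_apply,
      if_neg (fun hc : ¬ (i = sigmaPerm m j) ∧ _ ∧ _ => hc.1 h), sub_zero]
    simp only [Matrix.single, of_apply]
    rw [flip i j z]
  · rw [if_neg h, Matrix.sub_apply, Matrix.add_apply, Matrix.one_apply, Matrix.smul_apply]
    congr 1
    · simp only [Matrix.single, of_apply]
      rw [flip i j z]
    · simp only [Matrix.single, of_apply]
      rw [flip (sigmaPerm m j) (sigmaPerm m i) z]
      by_cases hc : x = sigmaPerm m j ∧ y = sigmaPerm m i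
      · rw [if_pos hc, if_pos ⟨h, hc⟩, smul_eq_mul]
      · rw [if_neg hc, if_neg (fun hd => hc hd.2), smul_zero]

lemma embedM_high' {m : ℕ} (A : Matrix (Fin (2*(m-1))) (Fin (2*(m-1))) R) (i j : Fin (2*m))
    (hi : 2 ≤ (i:ℕ)) (hj : 2 ≤ (j:ℕ)) (a b : Fin (2*(m-1)))
    (ha : (a:ℕ) = (i:ℕ)-2) (hb : (b:ℕ) = (j:ℕ)-2) :
    embedM R m A i j = A a b := by
  rw [embedM_high _ _ _ hi hj]
  congr 1
  · exact Fin.ext (show (i:ℕ)-2 = (a:ℕ) by omega)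
  · exact Fin.ext (show (j:ℕ)-2 = (b:ℕ) by omega)

lemma embedM_gen {m : ℕ} (hm : 1 ≤ m) (i j : Fin (2*(m-1))) (z : R) :
    embedM R m (sympE (m-1) i j z)
      = sympE m ⟨(i:ℕ)+2, by have := i.isLt; omega⟩ ⟨(j:ℕ)+2, by have := j.isLt; omega⟩ z := by
  have hiv := i.isLt
  have hjv := j.isLt
  obtain ⟨i', hi'⟩ : ∃ i' : Fin (2*m), i' = ⟨(i:ℕ)+2, by omega⟩ := ⟨_, rfl⟩
  obtain ⟨j', hj'⟩ : ∃ j' : Fin (2*m), j' = ⟨(j:ℕ)+2, by omega⟩ := ⟨_, rfl⟩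
  rw [← hi', ← hj']
  have hi'v : (i' : ℕ) = (i:ℕ)+2 := by rw [hi']
  have hj'v : (j' : ℕ) = (j:ℕ)+2 := by rw [hj']
  have hσj' : ((sigmaPerm m j' : ℕ)) = ((sigmaPerm (m-1) j : ℕ)) + 2 := by
    rw [hj']; exact sigma_shift j _
  have hσi' : ((sigmaPerm m i' : ℕ)) = ((sigmaPerm (m-1) i : ℕ)) + 2 := by
    rw [hi']; exact sigma_shift i _
  have hcond : (i = sigmaPerm (m-1) j) ↔ (i' = sigmaPerm m j') := by
    rw [Fin.ext_iff, Fin.ext_iff, hσj', hi'v]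
    omega
  have hsign : ((-1:R) ^ ((i':ℕ)+(j':ℕ))) = (-1:R) ^ ((i:ℕ)+(j:ℕ)) := by
    rw [hi'v, hj'v, show (i:ℕ)+2+((j:ℕ)+2) = ((i:ℕ)+(j:ℕ))+2+2 by omega]
    rw [pow_succ, pow_succ]
    ring
  ext x y
  rw [sympE_apply, hsign]
  by_cases hx : 2 ≤ (x:ℕ)
  · by_cases hy : 2 ≤ (y:ℕ)
    · obtain ⟨X, hX⟩ : ∃ X : Fin (2*(m-1)), (X:ℕ) = (x:ℕ)-2 :=
        ⟨⟨(x:ℕ)-2, by have := x.isLt; omega⟩, rfl⟩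
      obtain ⟨Y, hY⟩ : ∃ Y : Fin (2*(m-1)), (Y:ℕ) = (y:ℕ)-2 :=
        ⟨⟨(y:ℕ)-2, by have := y.isLt; omega⟩, rfl⟩
      rw [embedM_high' _ _ _ hx hy X Y hX hY, sympE_apply]
      have c1 : (X = Y) ↔ (x = y) := by
        rw [Fin.ext_iff, Fin.ext_iff, hX, hY]; omega
      have c2a : (X = i) ↔ (x = i') := by
        rw [Fin.ext_iff, Fin.ext_iff, hX, hi'v]; omega
      have c2b : (Y = j) ↔ (y = j') := by
        rw [Fin.ext_iff, Fin.ext_iff, hY, hj'v]; omega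
      have c3a : (X = sigmaPerm (m-1) j) ↔ (x = sigmaPerm m j') := by
        rw [Fin.ext_iff, Fin.ext_iff, hX, hσj']
        have := (sigmaPerm (m-1) j).isLt
        omega
      have c3b : (Y = sigmaPerm (m-1) i) ↔ (y = sigmaPerm m i') := by
        rw [Fin.ext_iff, Fin.ext_iff, hY, hσi']
        have := (sigmaPerm (m-1) i).isLt
        omega
      rw [if_congr c1 rfl rfl, if_congr (and_congr c2a c2b) rfl rfl,
        if_congr (and_congr (not_congr hcond) (and_congr c3a c3b)) rfl rfl]
    · -- x ≥ 2, y < 2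
      rw [embedM_low _ _ _ (Or.inr (by omega))]
      have d2 : ¬ (x = i' ∧ y = j') := by
        intro hh
        have h2 : (y:ℕ) = (j':ℕ) := by rw [hh.2]
        rw [hj'v] at h2
        omega
      have d3 : ¬ (¬ (i' = sigmaPerm m j') ∧ x = sigmaPerm m j' ∧ y = sigmaPerm m i') := by
        intro hh
        have h2 : (y:ℕ) = ((sigmaPerm m i' : ℕ)) := by rw [hh.2.2]
        rw [hσi'] at h2
        omega
      have d1 : (x = y) ↔ ((x:ℕ) = (y:ℕ)) := Fin.ext_iff
      rw [if_neg d2, if_neg d3, if_congr d1 rfl rfl]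
      ring
  · -- x < 2
    rw [embedM_low _ _ _ (Or.inl (by omega))]
    have d2 : ¬ (x = i' ∧ y = j') := by
      intro hh
      have h2 : (x:ℕ) = (i':ℕ) := by rw [hh.1]
      rw [hi'v] at h2
      omega
    have d3 : ¬ (¬ (i' = sigmaPerm m j') ∧ x = sigmaPerm m j' ∧ y = sigmaPerm m i') := by
      intro hh
      have h2 : (x:ℕ) = ((sigmaPerm m j' : ℕ)) := by rw [hh.2.1]
      rw [hσj'] at h2
      omega
    have d1 : (x = y) ↔ ((x:ℕ) = (y:ℕ)) := Fin.ext_iff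
    rw [if_neg d2, if_neg d3, if_congr d1 rfl rfl]
    ring

lemma embedM_mem {m : ℕ} (hm : 1 ≤ m) {E : Matrix (Fin (2*(m-1))) (Fin (2*(m-1))) R}
    (hE : E ∈ ESpGroup R (m-1)) : embedM R m E ∈ ESpGroup R m := by
  induction hE using Submonoid.closure_induction with
  | mem x hx =>
    obtain ⟨i, j, z, hij, rfl⟩ := hx
    rw [embedM_gen hm]
    apply mem_gen
    intro hh
    have h2 : (i:ℕ)+2 = (j:ℕ)+2 := congrArg Fin.val hh
    exact hij (Fin.ext (by omega))
  | one => rw [embedM_one]; exact one_mem _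
  | mul x y hx hy ihx ihy =>
    rw [← embedM_mul]
    exact mul_mem ihx ihy

lemma row_mul {p q r : ℕ} (V : Matrix (Fin p) (Fin q) R) (E : Matrix (Fin q) (Fin r) R)
    (i : Fin p) : (V * E) i = (V i) ᵥ* E := by
  funext j
  rw [Matrix.mul_apply]
  simp [Matrix.vecMul, dotProduct]

lemma mul_psi_apply {p m : ℕ} (W : Matrix (Fin p) (Fin (2*m)) R) (i : Fin p) (l : Fin (2*m)) :
    (W * psiMat R m) i l = W i (sigmaPerm m l) * (-1)^((sigmaPerm m l : ℕ)) := by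
  rw [Matrix.mul_apply, Finset.sum_eq_single (sigmaPerm m l)]
  · rw [psiMat_apply, if_pos (by rw [sigmaPerm_sigmaPerm])]
  · intro k _ hk
    rw [psiMat_apply, if_neg (fun hh => hk (by
      have : l = sigmaPerm m k := Fin.ext hh
      rw [sigmaPerm_eq_iff.mp this])), mul_zero]
  · intro hh; exact absurd (Finset.mem_univ _) hh

lemma psi_shift {m : ℕ} (i j : Fin (2*(m-1))) (hi : (i:ℕ)+2 < 2*m) (hj : (j:ℕ)+2 < 2*m) :
    psiMat R m ⟨(i:ℕ)+2, hi⟩ ⟨(j:ℕ)+2, hj⟩ = psiMat R (m-1) i j := by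
  rw [psiMat_apply, psiMat_apply, sigma_shift i hi]
  have hsg : ((-1:R)^(((⟨(i:ℕ)+2, hi⟩ : Fin (2*m))):ℕ)) = (-1:R)^((i:ℕ)) := by
    show ((-1:R)^((i:ℕ)+2)) = _
    rw [pow_succ, pow_succ]
    ring
  rw [hsg]
  exact if_congr (by
    show ((j:ℕ)+2 = ((sigmaPerm (m-1) i:ℕ))+2) ↔ ((j:ℕ) = ((sigmaPerm (m-1) i:ℕ)))
    omega) rfl rfl

theorem key {R : Type*} [CommRing R] [IsLocalRing R] :
    ∀ (n m : ℕ), n ≤ m → ∀ V : Matrix (Fin (2*n)) (Fin (2*m)) R,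
    (∃ B : Matrix (Fin (2*m)) (Fin (2*n)) R, V * B = 1) → (V * psiMat R m * Vᵀ = psiMat R n) →
    ∃ E ∈ ESpGroup R m,
      V * E = Matrix.of (fun (i : Fin (2*n)) (j : Fin (2*m)) =>
        if (j:ℕ) = (i:ℕ) then (1:R) else 0) := by
  intro n
  induction n with
  | zero =>
    intro m _ V _ _
    refine ⟨1, one_mem _, ?_⟩
    ext i j
    exact absurd i.isLt (by omega)
  | succ n ih =>
    intro m hnm V hVinv hVsp
    have hm : 1 ≤ m := by omega
    obtain ⟨B, hB⟩ := hVinv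
    have h00 : (V * B) ⟨0, by omega⟩ ⟨0, by omega⟩ = 1 := by rw [hB, Matrix.one_apply_eq]
    rw [Matrix.mul_apply] at h00
    obtain ⟨k0, hk0⟩ := exists_unit _ (show IsUnit (∑ k, V ⟨0, by omega⟩ k * B k ⟨0, by omega⟩)
      by rw [h00]; exact isUnit_one)
    have hk0' : IsUnit (V ⟨0, by omega⟩ k0) := isUnit_of_mul_isUnit_left hk0
    obtain ⟨EA, hEA, hEAr⟩ := rowA hm (V ⟨0, by omega⟩) ⟨k0, hk0'⟩
    obtain ⟨V1, hV1⟩ : ∃ V1, V1 = V * EA := ⟨_, rfl⟩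
    have hV1r0 : ∀ x, V1 ⟨0, by omega⟩ x = if (x:ℕ) = 0 then 1 else 0 := by
      intro x
      rw [hV1, congrFun (row_mul V EA ⟨0, by omega⟩) x]
      exact hEAr x
    have hV1sp : V1 * psiMat R m * V1ᵀ = psiMat R (n+1) := by
      rw [hV1, Matrix.transpose_mul]
      have e : V * EA * psiMat R m * (EAᵀ * Vᵀ) = V * (EA * psiMat R m * EAᵀ) * Vᵀ := by
        simp only [Matrix.mul_assoc]
      rw [e, (esp_sp hEA).2, hVsp]
    -- pairing computations
    have pair0 : ∀ (W : Matrix (Fin (2*(n+1))) (Fin (2*m)) R),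
        (∀ x, W ⟨0, by omega⟩ x = if (x:ℕ) = 0 then 1 else 0) →
        ∀ i' : Fin (2*(n+1)),
          (W * psiMat R m * Wᵀ) ⟨0, by omega⟩ i' = W i' ⟨1, by omega⟩ := by
      intro W hr0 i'
      have hterm : ∀ l : Fin (2*m), (W * psiMat R m) ⟨0, by omega⟩ l * Wᵀ l i'
          = if (l:ℕ) = 1 then W i' ⟨1, by omega⟩ else 0 := by
        intro l
        rw [mul_psi_apply, hr0, Matrix.transpose_apply]
        by_cases hl : (l:ℕ) = 1
        · have hσ : ((sigmaPerm m l : ℕ)) = 0 := sigma_val_eq _ _ (by omega) (by omega)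
          rw [if_pos hl, if_pos hσ, hσ, pow_zero, one_mul, one_mul,
            show l = (⟨1, by omega⟩ : Fin (2*m)) from Fin.ext hl]
        · have hσ : ¬ (((sigmaPerm m l : ℕ)) = 0) := by
            have := sigmaPerm_val l
            have hlt := l.isLt
            intro hh
            rw [hh] at this
            split_ifs at this <;> omega
          rw [if_neg hl, if_neg hσ, zero_mul, zero_mul]
      rw [Matrix.mul_apply, Finset.sum_congr rfl (fun l _ => hterm l),
        Finset.sum_eq_single (⟨1, by omega⟩ : Fin (2*m))]
      · rw [if_pos rfl]
      · intro l _ hl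
        rw [if_neg (fun hh => hl (Fin.ext hh))]
      · intro hh; exact absurd (Finset.mem_univ _) hh
    have pair1 : ∀ (W : Matrix (Fin (2*(n+1))) (Fin (2*m)) R),
        (∀ x, W ⟨1, by omega⟩ x = if (x:ℕ) = 1 then 1 else 0) →
        ∀ i' : Fin (2*(n+1)),
          (W * psiMat R m * Wᵀ) ⟨1, by omega⟩ i' = -(W i' ⟨0, by omega⟩) := by
      intro W hr1 i'
      have hterm : ∀ l : Fin (2*m), (W * psiMat R m) ⟨1, by omega⟩ l * Wᵀ l i'
          = if (l:ℕ) = 0 then -(W i' ⟨0, by omega⟩) else 0 := by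
        intro l
        rw [mul_psi_apply, hr1, Matrix.transpose_apply]
        by_cases hl : (l:ℕ) = 0
        · have hσ : ((sigmaPerm m l : ℕ)) = 1 := sigma_val_eq _ _ (by omega) (by omega)
          rw [if_pos hl, if_pos hσ, hσ, pow_one,
            show l = (⟨0, by omega⟩ : Fin (2*m)) from Fin.ext hl]
          ring
        · have hσ : ¬ (((sigmaPerm m l : ℕ)) = 1) := by
            have := sigmaPerm_val l
            have hlt := l.isLt
            intro hh
            rw [hh] at this
            split_ifs at this <;> omega
          rw [if_neg hl, if_neg hσ, zero_mul, zero_mul]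
      rw [Matrix.mul_apply, Finset.sum_congr rfl (fun l _ => hterm l),
        Finset.sum_eq_single (⟨0, by omega⟩ : Fin (2*m))]
      · rw [if_pos rfl]
      · intro l _ hl
        rw [if_neg (fun hh => hl (Fin.ext hh))]
      · intro hh; exact absurd (Finset.mem_univ _) hh
    -- psi values
    have hψ01 : psiMat R (n+1) ⟨0, by omega⟩ ⟨1, by omega⟩ = 1 := by
      rw [psiMat_apply]
      have hσ : ((sigmaPerm (n+1) (⟨0, by omega⟩ : Fin (2*(n+1))) : ℕ)) = 1 :=
        sigma_val_eq _ _ (fun _ => rfl) (fun h => by simp at h)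
      rw [if_pos (show ((⟨1, by omega⟩ : Fin (2*(n+1))):ℕ)
        = ((sigmaPerm (n+1) ⟨0, by omega⟩ : ℕ)) by rw [hσ])]
      exact pow_zero _
    have hψ0i : ∀ i' : Fin (2*(n+1)), 2 ≤ (i':ℕ) →
        psiMat R (n+1) ⟨0, by omega⟩ i' = 0 := by
      intro i' hi'
      rw [psiMat_apply]
      have hσ : ((sigmaPerm (n+1) (⟨0, by omega⟩ : Fin (2*(n+1))) : ℕ)) = 1 :=
        sigma_val_eq _ _ (fun _ => rfl) (fun h => by simp at h)
      rw [if_neg (by rw [hσ]; omega)]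
    have hψ1i : ∀ i' : Fin (2*(n+1)), 2 ≤ (i':ℕ) →
        psiMat R (n+1) ⟨1, by omega⟩ i' = 0 := by
      intro i' hi'
      rw [psiMat_apply]
      have hσ : ((sigmaPerm (n+1) (⟨1, by omega⟩ : Fin (2*(n+1))) : ℕ)) = 0 :=
        sigma_val_eq _ _ (fun h => by simp at h) (fun _ => rfl)
      rw [if_neg (by rw [hσ]; omega)]
    -- row 1 of V1 has entry 1 at position 1
    have hv11 : V1 ⟨1, by omega⟩ ⟨1, by omega⟩ = 1 := by
      have h := pair0 V1 hV1r0 ⟨1, by omega⟩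
      rw [hV1sp, hψ01] at h
      exact h.symm
    obtain ⟨EB, hEB, hEBr, hEBfix⟩ := rowB (R := R) hm (V1 ⟨1, by omega⟩) hv11
    obtain ⟨V2, hV2⟩ : ∃ V2, V2 = V1 * EB := ⟨_, rfl⟩
    have hV2r0 : ∀ x, V2 ⟨0, by omega⟩ x = if (x:ℕ) = 0 then 1 else 0 := by
      intro x
      rw [hV2, congrFun (row_mul V1 EB ⟨0, by omega⟩) x,
        show V1 ⟨0, by omega⟩ = (fun x : Fin (2*m) => if (x:ℕ) = 0 then (1:R) else 0)
          from funext hV1r0, hEBfix]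
    have hV2r1 : ∀ x, V2 ⟨1, by omega⟩ x = if (x:ℕ) = 1 then 1 else 0 := by
      intro x
      rw [hV2, congrFun (row_mul V1 EB ⟨1, by omega⟩) x]
      exact hEBr x
    have hV2sp : V2 * psiMat R m * V2ᵀ = psiMat R (n+1) := by
      rw [hV2, Matrix.transpose_mul]
      have e : V1 * EB * psiMat R m * (EBᵀ * V1ᵀ) = V1 * (EB * psiMat R m * EBᵀ) * V1ᵀ := by
        simp only [Matrix.mul_assoc]
      rw [e, (esp_sp hEB).2, hV1sp]
    -- rows ≥ 2 vanish at columns 0 and 1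
    have hw1 : ∀ i : Fin (2*(n+1)), 2 ≤ (i:ℕ) → V2 i ⟨1, by omega⟩ = 0 := by
      intro i hi
      have h := pair0 V2 hV2r0 i
      rw [hV2sp, hψ0i i hi] at h
      exact h.symm
    have hw0 : ∀ i : Fin (2*(n+1)), 2 ≤ (i:ℕ) → V2 i ⟨0, by omega⟩ = 0 := by
      intro i hi
      have h := pair1 V2 hV2r1 i
      rw [hV2sp, hψ1i i hi] at h
      have := h.symm
      rw [neg_eq_zero] at this
      exact this
    have hwlow : ∀ (i : Fin (2*(n+1))), 2 ≤ (i:ℕ) → ∀ (k : Fin (2*m)), (k:ℕ) < 2 →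
        V2 i k = 0 := by
      intro i hi k hk
      rcases (by omega : (k:ℕ) = 0 ∨ (k:ℕ) = 1) with hk0 | hk1
      · rw [show k = (⟨0, by omega⟩ : Fin (2*m)) from Fin.ext hk0]
        exact hw0 i hi
      · rw [show k = (⟨1, by omega⟩ : Fin (2*m)) from Fin.ext hk1]
        exact hw1 i hi
    -- invertibility
    obtain ⟨F, hF, hF1, hF2⟩ := esp_inv (mul_mem hEA hEB)
    have hV2B : V2 * (F * B) = 1 := by
      have e : V2 * (F * B) = V * (EA * EB * F) * B := by
        rw [hV2, hV1]
        simp only [Matrix.mul_assoc]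
      rw [e, hF1, Matrix.mul_one, hB]
    -- the reduced matrix V3
    obtain ⟨V3, hV3⟩ : ∃ V3 : Matrix (Fin (2*n)) (Fin (2*(m-1))) R,
        V3 = Matrix.of (fun (i : Fin (2*n)) (j : Fin (2*(m-1))) =>
          V2 ⟨(i:ℕ)+2, by have := i.isLt; omega⟩ ⟨(j:ℕ)+2, by have := j.isLt; omega⟩) :=
      ⟨_, rfl⟩
    have hV3e : ∀ (i : Fin (2*n)) (j : Fin (2*(m-1))),
        V3 i j = V2 ⟨(i:ℕ)+2, by have := i.isLt; omega⟩ ⟨(j:ℕ)+2, by have := j.isLt; omega⟩ :=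
      fun i j => by rw [hV3]; rfl
    -- V3 is right invertible
    have hV3inv : ∃ B3 : Matrix (Fin (2*(m-1))) (Fin (2*n)) R, V3 * B3 = 1 := by
      refine ⟨Matrix.of (fun (k : Fin (2*(m-1))) (l : Fin (2*n)) =>
        (F * B) ⟨(k:ℕ)+2, by have := k.isLt; omega⟩ ⟨(l:ℕ)+2, by have := l.isLt; omega⟩), ?_⟩
      ext i j
      have hiv := i.isLt
      have hjv := j.isLt
      have h1 : (V2 * (F * B)) ⟨(i:ℕ)+2, by omega⟩ ⟨(j:ℕ)+2, by omega⟩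
          = (1 : Matrix (Fin (2*(n+1))) (Fin (2*(n+1))) R) ⟨(i:ℕ)+2, by omega⟩ ⟨(j:ℕ)+2, by omega⟩ := by
        rw [hV2B]
      rw [Matrix.mul_apply] at h1
      rw [sum_shift m _ (fun k hk => by
        rw [hwlow ⟨(i:ℕ)+2, by omega⟩ (by exact le_add_self) k hk, zero_mul])] at h1
      rw [Matrix.mul_apply]
      calc ∑ k : Fin (2*(m-1)), V3 i k * Matrix.of (fun (k : Fin (2*(m-1))) (l : Fin (2*n)) =>
            (F * B) ⟨(k:ℕ)+2, by have := k.isLt; omega⟩ ⟨(l:ℕ)+2, by have := l.isLt; omega⟩) k j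
          = ∑ k : Fin (2*(m-1)), V2 ⟨(i:ℕ)+2, by omega⟩ ⟨(k:ℕ)+2, by have := k.isLt; omega⟩
              * (F * B) ⟨(k:ℕ)+2, by have := k.isLt; omega⟩ ⟨(j:ℕ)+2, by omega⟩ := by
            apply Finset.sum_congr rfl
            intro k _
            rw [hV3e]
            rfl
        _ = (1 : Matrix (Fin (2*(n+1))) (Fin (2*(n+1))) R) ⟨(i:ℕ)+2, by omega⟩ ⟨(j:ℕ)+2, by omega⟩ := h1
        _ = (1 : Matrix (Fin (2*n)) (Fin (2*n)) R) i j := by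
            rw [Matrix.one_apply, Matrix.one_apply]
            exact if_congr (by
              rw [Fin.ext_iff, Fin.ext_iff]
              show ((i:ℕ)+2 = (j:ℕ)+2) ↔ ((i:ℕ) = (j:ℕ))
              omega) rfl rfl
    -- V3 is symplectic
    have hV3sp : V3 * psiMat R (m-1) * V3ᵀ = psiMat R n := by
      ext i j
      have hiv := i.isLt
      have hjv := j.isLt
      have h1 : (V2 * psiMat R m * V2ᵀ) ⟨(i:ℕ)+2, by omega⟩ ⟨(j:ℕ)+2, by omega⟩
          = psiMat R (n+1) ⟨(i:ℕ)+2, by omega⟩ ⟨(j:ℕ)+2, by omega⟩ := by rw [hV2sp]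
      rw [Matrix.mul_apply] at h1
      rw [sum_shift m _ (fun l hl => by
        rw [Matrix.transpose_apply, hwlow ⟨(j:ℕ)+2, by omega⟩ (by exact le_add_self) l hl,
          mul_zero])] at h1
      rw [Matrix.mul_apply]
      calc ∑ l : Fin (2*(m-1)), (V3 * psiMat R (m-1)) i l * V3ᵀ l j
          = ∑ l : Fin (2*(m-1)),
              (V2 * psiMat R m) ⟨(i:ℕ)+2, by omega⟩ ⟨(l:ℕ)+2, by have := l.isLt; omega⟩
              * V2ᵀ (⟨(l:ℕ)+2, by have := l.isLt; omega⟩ : Fin (2*m)) ⟨(j:ℕ)+2, by omega⟩ := by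
            apply Finset.sum_congr rfl
            intro l _
            rw [mul_psi_apply, mul_psi_apply, Matrix.transpose_apply, Matrix.transpose_apply,
              hV3e, hV3e]
            have hσ : sigmaPerm m ⟨(l:ℕ)+2, by have := l.isLt; omega⟩
                = ⟨((sigmaPerm (m-1) l : ℕ))+2, by have := (sigmaPerm (m-1) l).isLt; omega⟩ :=
              Fin.ext (sigma_shift l (by have := l.isLt; omega))
            rw [hσ]
            have hsg : ((-1:R)^(((⟨((sigmaPerm (m-1) l : ℕ))+2, by
                have := (sigmaPerm (m-1) l).isLt; omega⟩ : Fin (2*m))):ℕ))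
                = (-1:R)^((sigmaPerm (m-1) l : ℕ)) := by
              show ((-1:R)^(((sigmaPerm (m-1) l : ℕ))+2)) = _
              rw [pow_succ, pow_succ]
              ring
            rw [hsg]
        _ = psiMat R (n+1) ⟨(i:ℕ)+2, by omega⟩ ⟨(j:ℕ)+2, by omega⟩ := h1
        _ = psiMat R n i j := psi_shift (m := n+1) i j (by omega) (by omega)
    -- apply the induction hypothesis
    obtain ⟨E3, hE3, hV3E3⟩ := ih (m-1) (by omega) V3 hV3inv hV3sp
    refine ⟨EA * (EB * embedM R m E3),
      mul_mem hEA (mul_mem hEB (embedM_mem hm hE3)), ?_⟩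
    have hVE : V * (EA * (EB * embedM R m E3)) = V2 * embedM R m E3 := by
      rw [hV2, hV1]
      simp only [Matrix.mul_assoc]
    rw [hVE]
    ext i j
    rw [Matrix.mul_apply, Matrix.of_apply]
    by_cases hi2 : 2 ≤ (i:ℕ)
    · rw [sum_shift m _ (fun k hk => by rw [hwlow i hi2 k hk, zero_mul])]
      by_cases hj2 : 2 ≤ (j:ℕ)
      · have hjv := j.isLt
        calc ∑ k : Fin (2*(m-1)), V2 i ⟨(k:ℕ)+2, by have := k.isLt; omega⟩
              * embedM R m E3 ⟨(k:ℕ)+2, by have := k.isLt; omega⟩ j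
            = ∑ k : Fin (2*(m-1)), V3 ⟨(i:ℕ)-2, by have := i.isLt; omega⟩ k
                * E3 k ⟨(j:ℕ)-2, by have := j.isLt; omega⟩ := by
              apply Finset.sum_congr rfl
              intro k _
              rw [embedM_high' E3 _ j (by simp) hj2 k ⟨(j:ℕ)-2, by omega⟩ (by simp) rfl,
                hV3e]
              congr 2
              exact Fin.ext (show (i:ℕ) = (i:ℕ)-2+2 by omega)
          _ = (V3 * E3) ⟨(i:ℕ)-2, by have := i.isLt; omega⟩ ⟨(j:ℕ)-2, by omega⟩ :=
              (Matrix.mul_apply).symm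
          _ = if ((j:ℕ)-2) = ((i:ℕ)-2) then 1 else 0 := by rw [hV3E3]; rfl
          _ = if (j:ℕ) = (i:ℕ) then 1 else 0 := if_congr (by omega) rfl rfl
      · rw [if_neg (by omega)]
        apply Finset.sum_eq_zero
        intro k _
        rw [embedM_low E3 _ j (Or.inr (by omega)), if_neg (by
          show ¬ ((k:ℕ)+2 = (j:ℕ))
          omega), mul_zero]
    · rcases (by omega : (i:ℕ) = 0 ∨ (i:ℕ) = 1) with hi0 | hi1
      · rw [show i = (⟨0, by omega⟩ : Fin (2*(n+1))) from Fin.ext hi0]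
        rw [Finset.sum_eq_single (⟨0, by omega⟩ : Fin (2*m))]
        · rw [hV2r0, if_pos rfl, one_mul, embedM_low E3 _ j (Or.inl (by norm_num))]
          exact if_congr (by exact eq_comm) rfl rfl
        · intro k _ hk
          rw [hV2r0, if_neg (fun hh => hk (Fin.ext hh)), zero_mul]
        · intro hh; exact absurd (Finset.mem_univ _) hh
      · rw [show i = (⟨1, by omega⟩ : Fin (2*(n+1))) from Fin.ext hi1]
        rw [Finset.sum_eq_single (⟨1, by omega⟩ : Fin (2*m))]
        · rw [hV2r1, if_pos rfl, one_mul, embedM_low E3 _ j (Or.inl (by norm_num))]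
          exact if_congr (by exact eq_comm) rfl rfl
        · intro k _ hk
          rw [hV2r1, if_neg (fun hh => hk (Fin.ext hh)), zero_mul]
        · intro hh; exact absurd (Finset.mem_univ _) hh

end Stmt7Aux

/-- over a commutative local ring, every `V ∈ SpUm_{2n,2m}(R)` with
`m ≥ n ≥ 1` is completable to an elementary symplectic matrix. -/
theorem stmt7 {R : Type*} [CommRing R] [Nontrivial R] [IsLocalRing R] {n m : ℕ}
    (hn : 1 ≤ n) (hnm : n ≤ m)
    (V : Matrix (Fin (2 * n)) (Fin (2 * m)) R)
    (hVinv : ∃ B : Matrix (Fin (2 * m)) (Fin (2 * n)) R, V * B = 1)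
    (hVsp : V * psiMat R m * Vᵀ = psiMat R n) :
    ∃ W : Matrix (Fin (2 * m)) (Fin (2 * m)) R, W ∈ ESpGroup R m ∧
      ∀ (i : Fin (2 * n)) (j : Fin (2 * m)),
        W (Fin.castLE (by omega : 2 * n ≤ 2 * m) i) j = V i j := by
  obtain ⟨E, hE, hVE⟩ := Stmt7Aux.key n m hnm V hVinv hVsp
  obtain ⟨F, hF, hEF, hFE⟩ := Stmt7Aux.esp_inv hE
  refine ⟨F, hF, ?_⟩
  intro i j
  have h2 : V = (V * E) * F := by rw [Matrix.mul_assoc, hEF, Matrix.mul_one]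
  rw [hVE] at h2
  have h3 := congrFun (congrFun h2 i) j
  rw [Matrix.mul_apply] at h3
  rw [Finset.sum_eq_single (Fin.castLE (by omega : 2*n ≤ 2*m) i)] at h3
  · rw [Matrix.of_apply, if_pos (Fin.coe_castLE _ i), one_mul] at h3
    exact h3.symm
  · intro k _ hk
    rw [Matrix.of_apply, if_neg (fun hh => hk (Fin.ext (by
      rw [hh, Fin.coe_castLE]))), zero_mul]
  · intro hh; exact absurd (Finset.mem_univ _) hh
end
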